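/- arXiv:1204.5371 — 4 statements merged into one kernel-verified Lean document; each statement's English description precedes it below -/
import Mathlib

section
/- A cellular automaton f on the full shift Σ^ℤ whose global map is expanding for the Besicovitch pseudometric (d_B(f(x),f(y)) ≥ d_B(x,y) for all x,y) is a Besicovitch isometry, and hence a composition of a shift and a symbol permutation. -/
open Filter

/-- Hamming distance between `x` and `y` on the coordinate interval `[a, b]`. -/
noncomputable def hamIcc {A : Type*} (x y : ℤ → A) (a b : ℤ) : ℕ :=
  @Finset.card ℤ (@Finset.filter ℤ (fun i => x i ≠ y i) (Classical.decPred _) (Finset.Icc a b))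

/-- The Besicovitch pseudodistance on `A^ℤ`. -/
noncomputable def dB {A : Type*} (x y : ℤ → A) : ℝ :=
  atTop.limsup fun n : ℕ => (hamIcc x y (-(n : ℤ)) n : ℝ) / (2 * n + 1)

/-- The Weyl pseudodistance on `A^ℤ`. -/
noncomputable def dW {A : Type*} (x y : ℤ → A) : ℝ :=
  atTop.limsup fun n : ℕ => ⨆ m : ℤ, (hamIcc x y (m - n) (m + n) : ℝ) / (2 * n + 1)

/-- The shift map. -/
def shiftMap {A : Type*} (x : ℤ → A) : ℤ → A := fun i => x (i + 1)

/-- A subshift: a shift-invariant subset of `A^ℤ` closed in the Cantor topology. -/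
def IsSubshift {A : Type*} (X : Set (ℤ → A)) : Prop :=
  (∀ x ∈ X, shiftMap x ∈ X) ∧ (∀ x ∈ X, (fun i => x (i - 1)) ∈ X) ∧
  (∀ x : ℤ → A, (∀ n : ℕ, ∃ y ∈ X, ∀ i : ℤ, |i| ≤ (n : ℤ) → y i = x i) → x ∈ X)

/-- The word `w` occurs in (some point of) `X`. -/
def occursIn {A : Type*} (X : Set (ℤ → A)) {k : ℕ} (w : Fin k → A) : Prop :=
  ∃ x ∈ X, ∃ i : ℤ, ∀ j : Fin k, x (i + j) = w j

/-- A shift of finite type: defined by a clopen window condition. -/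
def IsSFT {A : Type*} (X : Set (ℤ → A)) : Prop :=
  ∃ (k : ℕ) (P : (Fin k → A) → Prop), X = {x | ∀ i : ℤ, P (fun j => x (i + j))}

/-- A sliding block code (cellular automaton when `A = B`) of some radius `r`. -/
def IsSlidingBlock {A B : Type*} (φ : (ℤ → A) → (ℤ → B)) : Prop :=
  ∃ (r : ℕ) (f : (Fin (2 * r + 1) → A) → B), ∀ x i, φ x i = f fun j => x (i - r + j)

/-- A sofic shift: the image of an SFT under a sliding block code. -/
def IsSofic {A : Type*} (X : Set (ℤ → A)) : Prop :=
  ∃ (B : Type) (_ : Fintype B) (Y : Set (ℤ → B)) (φ : (ℤ → B) → (ℤ → A)),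
    IsSFT Y ∧ IsSlidingBlock φ ∧ X = φ '' Y

/-- Topological mixing for shift spaces, in terms of words of the language. -/
def IsMixingShift {A : Type*} (X : Set (ℤ → A)) : Prop :=
  ∀ (k l : ℕ) (u : Fin k → A) (v : Fin l → A), occursIn X u → occursIn X v →
    ∃ N : ℕ, ∀ n ≥ N, ∃ x ∈ X, ∃ i : ℤ,
      (∀ j : Fin k, x (i + j) = u j) ∧ (∀ j : Fin l, x (i + k + n + j) = v j)

/-- Topological entropy of a shift space. -/
noncomputable def shiftEntropy {A : Type*} (X : Set (ℤ → A)) : ℝ :=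
  atTop.limsup fun n : ℕ => Real.log (Set.ncard {w : Fin n → A | occursIn X w}) / n

/-- The periodic configuration `∞w∞` with period word `w`. -/
def perPt {A : Type*} {n : ℕ} (hn : 0 < n) (w : Fin n → A) : ℤ → A := fun i =>
  w ⟨(i % (n : ℤ)).toNat, by
    have h1 : (0 : ℤ) < (n : ℤ) := by exact_mod_cast hn
    have h2 := Int.emod_nonneg i (by omega : (n : ℤ) ≠ 0)
    have h3 := Int.emod_lt_of_pos i h1
    omega⟩

/-- The density coding `U' : [0,1] → {0,1}^ℕ`: the dyadic interval of `ℕ` containing `n`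
has left endpoint `2^(Nat.log 2 (n+1)) - 1` and length `L = 2^(Nat.log 2 (n+1))`; it is
filled with `⌊x·L⌋` zeros (`false`) followed by ones (`true`). -/
noncomputable def Uprime (x : ℝ) (n : ℕ) : Bool :=
  decide (⌊x * 2 ^ Nat.log 2 (n + 1)⌋ ≤ ((n : ℤ) + 1 - 2 ^ Nat.log 2 (n + 1)))

/-- The two-sided version `T'(x) = U'(x)^R.U'(x)`. -/
noncomputable def Tprime (x : ℝ) : ℤ → Bool := fun i =>
  if 0 ≤ i then Uprime x i.toNat else Uprime x (-i - 1).toNat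

/-- The one-sided Besicovitch pseudodistance. -/
noncomputable def dB1 {A : Type*} (u v : ℕ → A) : ℝ :=
  atTop.limsup fun n : ℕ =>
    ((@Finset.filter ℕ (fun i => u i ≠ v i) (Classical.decPred _) (Finset.range n)).card : ℝ) / n


namespace ExpCAAux
open Finset Filter

variable {A : Type*}

/-! ### hamIcc infrastructure -/

noncomputable def dIcc (x y : ℤ → A) (a b : ℤ) : Finset ℤ :=
  @Finset.filter ℤ (fun i => x i ≠ y i) (Classical.decPred _) (Finset.Icc a b)

lemma hamIcc_eq (x y : ℤ → A) (a b : ℤ) : hamIcc x y a b = (dIcc x y a b).card := rfl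

lemma mem_dIcc {x y : ℤ → A} {a b i : ℤ} :
    i ∈ dIcc x y a b ↔ (a ≤ i ∧ i ≤ b) ∧ x i ≠ y i := by
  classical
  unfold dIcc
  simp only [Finset.mem_filter, Finset.mem_Icc]

lemma dIcc_subset {x y : ℤ → A} {a b a' b' : ℤ} (h1 : a' ≤ a) (h2 : b ≤ b') :
    dIcc x y a b ⊆ dIcc x y a' b' := by
  intro i hi
  rw [mem_dIcc] at hi ⊢
  exact ⟨⟨le_trans h1 hi.1.1, le_trans hi.1.2 h2⟩, hi.2⟩

lemma hamIcc_mono {x y : ℤ → A} {a b a' b' : ℤ} (h1 : a' ≤ a) (h2 : b ≤ b') :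
    hamIcc x y a b ≤ hamIcc x y a' b' := by
  rw [hamIcc_eq, hamIcc_eq]
  exact Finset.card_le_card (dIcc_subset h1 h2)

lemma hamIcc_le {x y : ℤ → A} {a b : ℤ} (hab : a ≤ b + 1) : (hamIcc x y a b : ℤ) ≤ b + 1 - a := by
  classical
  rw [hamIcc_eq]
  have h1 : (dIcc x y a b).card ≤ (Finset.Icc a b).card := by
    apply Finset.card_le_card
    intro i hi
    rw [mem_dIcc] at hi
    rw [Finset.mem_Icc]
    exact hi.1
  have h2 : (Finset.Icc a b).card = (b + 1 - a).toNat := Int.card_Icc a b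
  omega

lemma hamIcc_split (x y : ℤ → A) {a b c : ℤ} (h1 : a ≤ b + 1) (h2 : b ≤ c) :
    hamIcc x y a c = hamIcc x y a b + hamIcc x y (b+1) c := by
  rw [hamIcc_eq, hamIcc_eq, hamIcc_eq]
  have hunion : dIcc x y a c = dIcc x y a b ∪ dIcc x y (b+1) c := by
    ext i; simp only [mem_dIcc, Finset.mem_union]
    constructor
    · rintro ⟨⟨hx1, hx2⟩, hne⟩
      by_cases h : i ≤ b
      · exact Or.inl ⟨⟨hx1, h⟩, hne⟩
      · exact Or.inr ⟨⟨by omega, hx2⟩, hne⟩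
    · rintro (⟨⟨hx1, hx2⟩, hne⟩ | ⟨⟨hx1, hx2⟩, hne⟩) <;> exact ⟨⟨by omega, by omega⟩, hne⟩
  rw [hunion, Finset.card_union_of_disjoint]
  rw [Finset.disjoint_left]
  intro i hi hi'
  rw [mem_dIcc] at hi hi'
  omega

/-! ### diffs / Ham on finite index types -/

noncomputable def diffs {ι : Type*} [Fintype ι] (u v : ι → A) : Finset ι :=
  @Finset.filter ι (fun c => u c ≠ v c) (Classical.decPred _) Finset.univ

noncomputable def Ham {ι : Type*} [Fintype ι] (u v : ι → A) : ℕ := (diffs u v).card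

lemma mem_diffs {ι : Type*} [Fintype ι] {u v : ι → A} {c : ι} : c ∈ diffs u v ↔ u c ≠ v c := by
  classical
  unfold diffs
  simp only [Finset.mem_filter, Finset.mem_univ, true_and]

lemma diffs_comm {ι : Type*} [Fintype ι] (u v : ι → A) : diffs u v = diffs v u := by
  ext c; rw [mem_diffs, mem_diffs]; exact ne_comm

lemma diffs_triangle {ι : Type*} [Fintype ι] [DecidableEq ι] (u v w : ι → A) :
    diffs u w ⊆ diffs u v ∪ diffs v w := by
  intro c hc
  rw [mem_diffs] at hc
  rw [Finset.mem_union, mem_diffs, mem_diffs]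
  by_cases h : u c = v c
  · exact Or.inr (h ▸ hc)
  · exact Or.inl h

lemma Ham_eq_zero_iff {ι : Type*} [Fintype ι] {u v : ι → A} : Ham u v = 0 ↔ u = v := by
  rw [Ham, Finset.card_eq_zero]
  constructor
  · intro h
    funext c
    by_contra hc
    have : c ∈ diffs u v := mem_diffs.mpr hc
    rw [h] at this
    exact absurd this (Finset.notMem_empty c)
  · intro h
    ext c
    simp only [mem_diffs, Finset.notMem_empty, iff_false, not_not, h]

lemma diffs_update {ι : Type*} [Fintype ι] [DecidableEq ι] {u : ι → A} {c : ι} {b : A}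
    (hb : b ≠ u c) : diffs u (Function.update u c b) = {c} := by
  ext d
  rw [mem_diffs, Finset.mem_singleton, Function.update_apply]
  by_cases h : d = c
  · subst h
    rw [if_pos rfl]
    exact iff_of_true (fun he => hb he.symm) rfl
  · rw [if_neg h]
    exact iff_of_false (fun he => he rfl) h

lemma diffs_update2 {ι : Type*} [Fintype ι] [DecidableEq ι] {u : ι → A} {c c' : ι} {b b' : A}
    (hcc : c ≠ c') (hb : b ≠ u c) (hb' : b' ≠ u c') :
    diffs u (Function.update (Function.update u c b) c' b') = {c, c'} := by
  ext d
  rw [mem_diffs, Finset.mem_insert, Finset.mem_singleton, Function.update_apply,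
    Function.update_apply]
  by_cases h1 : d = c'
  · subst h1
    rw [if_pos rfl]
    exact iff_of_true (fun he => hb' he.symm) (Or.inr rfl)
  · rw [if_neg h1]
    by_cases h2 : d = c
    · subst h2
      rw [if_pos rfl]
      exact iff_of_true (fun he => hb he.symm) (Or.inl rfl)
    · rw [if_neg h2]
      exact iff_of_false (fun he => he rfl) (fun hor => hor.elim h2 h1)

/-! ### Periodic configurations -/

section Periodic
variable (N : ℕ) [NeZero N]

def emb (u : ZMod N → A) : ℤ → A := fun i => u (i : ZMod N)

lemma intCast_inj_of_window {a i j : ℤ} (hi1 : a ≤ i) (hi2 : i ≤ a + N - 1)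
    (hj1 : a ≤ j) (hj2 : j ≤ a + N - 1) (h : (i : ZMod N) = (j : ZMod N)) : i = j := by
  have hmod := (ZMod.intCast_eq_intCast_iff i j N).mp h
  obtain ⟨k, hk⟩ := Int.ModEq.dvd hmod
  have hNpos : (0 : ℤ) < N := by exact_mod_cast Nat.pos_of_ne_zero (NeZero.ne N)
  have hk1 : k < 1 := by
    by_contra hc
    push_neg at hc
    nlinarith
  have hk2 : -1 < k := by
    by_contra hc
    push_neg at hc
    nlinarith
  have : k = 0 := by omega
  rw [this, mul_zero] at hk
  omega

lemma hamIcc_window (u v : ZMod N → A) (a : ℤ) :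
    hamIcc (emb N u) (emb N v) a (a + N - 1) = Ham u v := by
  classical
  rw [hamIcc_eq, Ham]
  refine Finset.card_bij (fun i _ => (i : ZMod N)) ?_ ?_ ?_
  · intro i hi
    rw [mem_dIcc] at hi
    rw [mem_diffs]
    exact hi.2
  · intro i hi j hj h
    rw [mem_dIcc] at hi hj
    exact intCast_inj_of_window N hi.1.1 hi.1.2 hj.1.1 hj.1.2 h
  · intro c hc
    rw [mem_diffs] at hc
    have hval : ((c - (a : ZMod N)).val) < N := ZMod.val_lt _
    have hcast : ((a + (((c - (a : ZMod N)).val : ℕ) : ℤ) : ℤ) : ZMod N) = c := by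
      push_cast
      rw [ZMod.natCast_rightInverse (c - (a : ZMod N))]
      ring
    refine ⟨a + (((c - (a : ZMod N)).val : ℕ) : ℤ), ?_, hcast⟩
    rw [mem_dIcc]
    refine ⟨⟨by omega, by omega⟩, ?_⟩
    show u _ ≠ v _
    rw [hcast]
    exact hc

lemma hamIcc_multiple (u v : ZMod N → A) : ∀ (k : ℕ) (a : ℤ),
    hamIcc (emb N u) (emb N v) a (a + k * N - 1) = k * Ham u v := by
  intro k
  induction k with
  | zero =>
    intro a
    rw [hamIcc_eq]
    have he : dIcc (emb N u) (emb N v) a (a + (0 : ℕ) * N - 1) = ∅ := by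
      ext i
      simp only [mem_dIcc, Finset.notMem_empty, iff_false, not_and]
      intro hi
      push_cast at hi
      omega
    rw [he]
    simp
  | succ k ih =>
    intro a
    have hN1 : 1 ≤ (N : ℤ) := by
      have := Nat.pos_of_ne_zero (NeZero.ne N); omega
    have hkN : 0 ≤ (k : ℤ) * N := by positivity
    have hend : a + ((k+1 : ℕ) : ℤ) * N - 1 = (a + N) + (k : ℕ) * N - 1 := by push_cast; ring
    rw [hamIcc_split _ _ (show a ≤ (a + N - 1) + 1 by omega)
        (show (a : ℤ) + N - 1 ≤ a + ((k+1 : ℕ) : ℤ) * N - 1 by push_cast; nlinarith)]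
    rw [hamIcc_window]
    have := ih (a + N)
    rw [show (a : ℤ) + N - 1 + 1 = a + N by ring, hend, this]
    push_cast
    ring

lemma tendsto_const_div (C : ℝ) :
    Filter.Tendsto (fun n : ℕ => C / (2 * (n : ℝ) + 1)) Filter.atTop (nhds 0) := by
  apply Filter.Tendsto.div_atTop tendsto_const_nhds
  apply Filter.tendsto_atTop_add_const_right
  exact (tendsto_natCast_atTop_atTop (R := ℝ)).const_mul_atTop two_pos

lemma dB_emb (u v : ZMod N → A) : dB (emb N u) (emb N v) = (Ham u v : ℝ) / N := by
  have hNpos : (0:ℝ) < N := by exact_mod_cast Nat.pos_of_ne_zero (NeZero.ne N)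
  have hNZ : 0 < N := Nat.pos_of_ne_zero (NeZero.ne N)
  apply Filter.Tendsto.limsup_eq
  rw [tendsto_iff_dist_tendsto_zero]
  apply squeeze_zero (fun n => dist_nonneg)
    (g := fun n : ℕ => (Ham u v : ℝ) / (2 * (n:ℝ) + 1)) ?_ (tendsto_const_div _)
  intro n
  set H : ℕ := Ham u v with hH
  obtain ⟨k, m, hdm, hm⟩ : ∃ k m, k * N + m = 2 * n + 1 ∧ m < N :=
    ⟨(2 * n + 1) / N, (2 * n + 1) % N, by rw [Nat.mul_comm]; exact Nat.div_add_mod _ _, Nat.mod_lt _ hNZ⟩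
  have hk1 : k * N ≤ 2 * n + 1 := by omega
  have hk2 : 2 * n + 1 < (k + 1) * N := by
    have hx : (k + 1) * N = k * N + N := by ring
    omega
  -- lower bound
  have hlow : k * H ≤ hamIcc (emb N u) (emb N v) (-(n:ℤ)) n := by
    rw [← hamIcc_multiple N u v k (-(n:ℤ))]
    apply hamIcc_mono le_rfl
    have hc1 : (k : ℤ) * N ≤ 2 * n + 1 := by exact_mod_cast hk1
    omega
  have hhigh : hamIcc (emb N u) (emb N v) (-(n:ℤ)) n ≤ (k+1) * H := by
    rw [← hamIcc_multiple N u v (k+1) (-(n:ℤ))]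
    apply hamIcc_mono le_rfl
    have hc2 : (2:ℤ) * n + 1 < ((k:ℤ)+1) * N := by exact_mod_cast hk2
    have hc3 : ((k:ℤ)+1) * N = (k:ℤ)*N + N := by ring
    push_cast
    omega
  set c : ℕ := hamIcc (emb N u) (emb N v) (-(n:ℤ)) n with hc
  have hLr : (0:ℝ) < 2 * (n:ℝ) + 1 := by positivity
  rw [Real.dist_eq, abs_sub_le_iff]
  -- real versions
  have f1 : (c:ℝ) * N ≤ (2*(n:ℝ)+1) * H + N * H := by
    have : (c:ℝ) ≤ (k+1) * H := by exact_mod_cast hhigh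
    have h2 : ((k:ℝ)) * N ≤ 2*(n:ℝ)+1 := by exact_mod_cast hk1
    nlinarith [Nat.cast_nonneg (α := ℝ) H, Nat.cast_nonneg (α := ℝ) k]
  have f2 : (H:ℝ) * (2*(n:ℝ)+1) ≤ (c:ℝ) * N + H * N := by
    have h1 : ((k:ℝ)) * H ≤ c := by exact_mod_cast hlow
    have h2 : 2*(n:ℝ)+1 ≤ ((k:ℝ)+1) * N := by
      have : 2 * n + 1 ≤ (k+1) * N := le_of_lt hk2
      exact_mod_cast this
    nlinarith [Nat.cast_nonneg (α := ℝ) H]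
  constructor
  · rw [sub_le_iff_le_add]
    show (c:ℝ)/(2*(n:ℝ)+1) ≤ (H:ℝ)/(2*(n:ℝ)+1) + (H:ℝ)/(N:ℝ)
    rw [div_add_div _ _ hLr.ne' hNpos.ne', div_le_div_iff₀ hLr (by positivity)]
    nlinarith [Nat.cast_nonneg (α := ℝ) H, Nat.cast_nonneg (α := ℝ) c]
  · rw [sub_le_iff_le_add]
    show (H:ℝ)/(N:ℝ) ≤ (H:ℝ)/(2*(n:ℝ)+1) + (c:ℝ)/(2*(n:ℝ)+1)
    rw [← add_div, div_le_div_iff₀ hNpos hLr]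
    nlinarith [Nat.cast_nonneg (α := ℝ) H, Nat.cast_nonneg (α := ℝ) c]

end Periodic

/-! ### Expanding maps of finite Hamming spaces are isometries -/

lemma finite_expanding_isometry {X : Type*} [Fintype X] (Φ : X → X) (d : X → X → ℕ)
    (hd0 : ∀ a b, d a b = 0 ↔ a = b) (hexp : ∀ a b, d a b ≤ d (Φ a) (Φ b)) :
    ∀ a b, d (Φ a) (Φ b) = d a b := by
  have hinj : Function.Injective Φ := by
    intro a b hab
    have h1 := hexp a b
    rw [hab] at h1
    have h2 : d (Φ b) (Φ b) = 0 := (hd0 _ _).mpr rfl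
    exact (hd0 a b).mp (by omega)
  have hbij : Function.Bijective Φ := Finite.injective_iff_bijective.mp hinj
  let e : X ≃ X := Equiv.ofBijective Φ hbij
  have hsum : ∑ p : X × X, d p.1 p.2 = ∑ p : X × X, d (Φ p.1) (Φ p.2) := by
    have := Equiv.sum_comp (e.prodCongr e) (fun p : X × X => d p.1 p.2)
    rw [← this]
    apply Finset.sum_congr rfl
    intro p _
    rfl
  intro a b
  have := (Finset.sum_eq_sum_iff_of_le
    (f := fun p : X × X => d p.1 p.2) (g := fun p : X × X => d (Φ p.1) (Φ p.2))
    (fun p _ => hexp p.1 p.2)).mp hsum (a, b) (Finset.mem_univ _)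
  exact this.symm

/-! ### Structure theorem: expanding sliding-block induced maps on cyclic words -/

def Phi {A : Type*} {r N : ℕ} (f : (Fin (2*r+1) → A) → A) (u : ZMod N → A) : ZMod N → A :=
  fun c => f (fun k => u (c - ((r : ℕ) : ZMod N) + ((k : ℕ) : ZMod N)))

theorem master {A : Type*} [Fintype A] (a0 b0 : A) (hab : a0 ≠ b0) {r N : ℕ} [NeZero N]
    (hNr : 2*r+1 < N) (f : (Fin (2*r+1) → A) → A)
    (hiso : ∀ u v : ZMod N → A, Ham (Phi f u) (Phi f v) = Ham u v) :
    ∃ (k0 : Fin (2*r+1)) (g : A → A), Function.Injective g ∧ ∀ w, f w = g (w k0) := by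
  classical
  haveI : Nontrivial A := ⟨a0, b0, hab⟩
  set u₀ : ZMod N → A := fun _ => a0 with hu₀
  -- single flips change the image in exactly one position
  have flip1 : ∀ (u : ZMod N → A) (c : ZMod N) (b : A), b ≠ u c →
      ∃ j, diffs (Phi f u) (Phi f (Function.update u c b)) = {j} := by
    intro u c b hb
    apply Finset.card_eq_one.mp
    have : Ham (Phi f u) (Phi f (Function.update u c b)) = 1 := by
      rw [hiso, Ham, diffs_update hb, Finset.card_singleton]
    exact this
  -- the image position does not depend on the flip value
  have lemA : ∀ (u : ZMod N → A) (c : ZMod N), ∃ j, ∀ b, b ≠ u c →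
      diffs (Phi f u) (Phi f (Function.update u c b)) = {j} := by
    intro u c
    obtain ⟨b₁, hb₁⟩ := exists_ne (u c)
    obtain ⟨j, hj⟩ := flip1 u c b₁ hb₁
    refine ⟨j, ?_⟩
    intro b hb
    by_cases hbb : b = b₁
    · rw [hbb]; exact hj
    obtain ⟨j3, hj3⟩ := flip1 u c b hb
    have hbv : b ≠ (Function.update u c b₁) c := by rw [Function.update_self]; exact hbb
    obtain ⟨j2, hj2⟩ := flip1 (Function.update u c b₁) c b hbv
    rw [Function.update_idem] at hj2
    have hj2' : diffs (Phi f (Function.update u c b)) (Phi f (Function.update u c b₁)) = {j2} := by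
      rw [diffs_comm]; exact hj2
    have h1 : ({j3} : Finset (ZMod N)) ⊆ {j} ∪ {j2} := by
      rw [← hj3, ← hj, ← hj2]
      exact diffs_triangle ..
    have h2 : ({j} : Finset (ZMod N)) ⊆ {j3} ∪ {j2} := by
      rw [← hj3, ← hj, ← hj2']
      exact diffs_triangle ..
    simp only [Finset.singleton_subset_iff, Finset.mem_union, Finset.mem_singleton] at h1 h2
    have hj3j : j3 = j := by
      rcases h1 with h | h
      · exact h
      · rcases h2 with h' | h'
        · exact h'.symm
        · rw [h, ← h']
    rw [hj3, hj3j]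
  choose π hπ using lemA
  have hπsym : ∀ (u : ZMod N → A) (c : ZMod N) (b : A), b ≠ u c →
      π (Function.update u c b) c = π u c := by
    intro u c b hb
    have h1 : (u c) ≠ (Function.update u c b) c := by
      rw [Function.update_self]; exact fun h => hb h.symm
    have h2 := hπ (Function.update u c b) c (u c) h1
    rw [Function.update_idem, Function.update_eq_self] at h2
    have h3 := hπ u c b hb
    have h4 : ({π u c} : Finset (ZMod N)) = {π (Function.update u c b) c} := by
      rw [← h3, diffs_comm, h2]
    exact (Finset.singleton_injective h4).symm
  have lemC : ∀ (u : ZMod N → A) (c c' : ZMod N), c ≠ c' → π u c ≠ π u c' := by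
    intro u c c' hcc heq
    obtain ⟨b, hb⟩ := exists_ne (u c)
    obtain ⟨b', hb'⟩ := exists_ne (u c')
    have hdvv : diffs (Function.update u c b) (Function.update u c' b') = {c, c'} := by
      ext d
      rw [mem_diffs, Finset.mem_insert, Finset.mem_singleton, Function.update_apply,
        Function.update_apply]
      by_cases h1 : d = c
      · subst h1
        rw [if_pos rfl, if_neg hcc]
        exact iff_of_true hb (Or.inl rfl)
      · rw [if_neg h1]
        by_cases h2 : d = c'
        · subst h2
          rw [if_pos rfl]
          exact iff_of_true (fun he => hb' he.symm) (Or.inr rfl)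
        · rw [if_neg h2]
          exact iff_of_false (fun he => he rfl) (fun hor => hor.elim h1 h2)
    have h2 : Ham (Phi f (Function.update u c b)) (Phi f (Function.update u c' b')) = 2 := by
      rw [hiso, Ham, hdvv, Finset.card_insert_of_notMem (by
        rw [Finset.mem_singleton]; exact hcc), Finset.card_singleton]
    have hsub : diffs (Phi f (Function.update u c b)) (Phi f (Function.update u c' b')) ⊆
        {π u c} ∪ {π u c'} := by
      have t1 := hπ u c b hb
      have t2 := hπ u c' b' hb'
      have h := diffs_triangle (Phi f (Function.update u c b)) (Phi f u)
        (Phi f (Function.update u c' b'))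
      rw [diffs_comm] at t1
      rw [t1, t2] at h
      exact h
    rw [heq, Finset.union_self] at hsub
    have hle := Finset.card_le_card hsub
    rw [Finset.card_singleton] at hle
    have h2' : (diffs (Phi f (Function.update u c b)) (Phi f (Function.update u c' b'))).card = 2 := h2
    omega
  have lemB : ∀ (u : ZMod N → A) (c c' : ZMod N) (b' : A), c ≠ c' → b' ≠ u c' →
      π (Function.update u c' b') c = π u c := by
    intro u c c' b' hcc hb'
    obtain ⟨b, hb⟩ := exists_ne (u c)
    have hvc : (Function.update u c' b') c = u c := Function.update_of_ne hcc _ _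
    have hbv : b ≠ (Function.update u c' b') c := by rw [hvc]; exact hb
    have hdw : diffs u (Function.update (Function.update u c' b') c b) = {c', c} :=
      diffs_update2 (Ne.symm hcc) hb' hb
    have hDcard :
        (diffs (Phi f u) (Phi f (Function.update (Function.update u c' b') c b))).card = 2 := by
      have : Ham (Phi f u) (Phi f (Function.update (Function.update u c' b') c b)) = 2 := by
        rw [hiso, Ham, hdw, Finset.card_insert_of_notMem (by
          rw [Finset.mem_singleton]; exact Ne.symm hcc), Finset.card_singleton]
      exact this
    have hsub1 : diffs (Phi f u) (Phi f (Function.update (Function.update u c' b') c b)) ⊆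
        {π u c'} ∪ {π (Function.update u c' b') c} := by
      have t1 := hπ u c' b' hb'
      have t2 := hπ (Function.update u c' b') c b hbv
      have h := diffs_triangle (Phi f u) (Phi f (Function.update u c' b'))
        (Phi f (Function.update (Function.update u c' b') c b))
      rw [t1, t2] at h
      exact h
    have hw2 : Function.update (Function.update u c' b') c b
        = Function.update (Function.update u c b) c' b' := Function.update_comm (Ne.symm hcc) _ _ _
    have hb'2 : b' ≠ (Function.update u c b) c' := by
      rw [Function.update_of_ne (Ne.symm hcc)]; exact hb'
    have hsub2 : diffs (Phi f u) (Phi f (Function.update (Function.update u c' b') c b)) ⊆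
        {π u c} ∪ {π (Function.update u c b) c'} := by
      have t1 := hπ u c b hb
      have t2 := hπ (Function.update u c b) c' b' hb'2
      have h := diffs_triangle (Phi f u) (Phi f (Function.update u c b))
        (Phi f (Function.update (Function.update u c b) c' b'))
      rw [t1, t2] at h
      rw [hw2]
      exact h
    have hD1 : diffs (Phi f u) (Phi f (Function.update (Function.update u c' b') c b)) =
        {π u c'} ∪ {π (Function.update u c' b') c} := by
      apply Finset.eq_of_subset_of_card_le hsub1
      calc ({π u c'} ∪ {π (Function.update u c' b') c} : Finset (ZMod N)).card
          ≤ ({π u c'} : Finset (ZMod N)).card + ({π (Function.update u c' b') c} : Finset (ZMod N)).card :=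
            Finset.card_union_le _ _
        _ ≤ 2 := by rw [Finset.card_singleton, Finset.card_singleton]
        _ = _ := hDcard.symm
    have hD2 : diffs (Phi f u) (Phi f (Function.update (Function.update u c' b') c b)) =
        {π u c} ∪ {π (Function.update u c b) c'} := by
      apply Finset.eq_of_subset_of_card_le hsub2
      calc ({π u c} ∪ {π (Function.update u c b) c'} : Finset (ZMod N)).card
          ≤ ({π u c} : Finset (ZMod N)).card + ({π (Function.update u c b) c'} : Finset (ZMod N)).card :=
            Finset.card_union_le _ _
        _ ≤ 2 := by rw [Finset.card_singleton, Finset.card_singleton]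
        _ = _ := hDcard.symm
    have hmem : π (Function.update u c' b') c ∈
        diffs (Phi f u) (Phi f (Function.update (Function.update u c' b') c b)) := by
      rw [hD1]; simp
    rw [hD2, Finset.mem_union, Finset.mem_singleton, Finset.mem_singleton] at hmem
    rcases hmem with h | h
    · exact h
    · exfalso
      have hmem' : π u c' ∈
          diffs (Phi f u) (Phi f (Function.update (Function.update u c' b') c b)) := by
        rw [hD1]; simp
      rw [hD2, Finset.mem_union, Finset.mem_singleton, Finset.mem_singleton] at hmem'
      rcases hmem' with h' | h'
      · exact lemC u c' c (Ne.symm hcc) h'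
      · rw [hD1, h, h', Finset.union_self, Finset.card_singleton] at hDcard
        omega
  have ham_step : ∀ (u v : ZMod N → A) (c' : ZMod N), c' ∈ diffs u v →
      Ham (Function.update u c' (v c')) v + 1 = Ham u v := by
    intro u v c' hc'
    have hd : diffs (Function.update u c' (v c')) v = (diffs u v).erase c' := by
      ext d
      rw [mem_diffs, Finset.mem_erase, mem_diffs, Function.update_apply]
      by_cases hdc : d = c'
      · subst hdc; rw [if_pos rfl]; simp
      · rw [if_neg hdc]; simp [hdc]
    rw [Ham, Ham, hd, Finset.card_erase_of_mem hc']
    have : 0 < (diffs u v).card := Finset.card_pos.mpr ⟨c', hc'⟩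
    omega
  have lemD : ∀ (n : ℕ) (u v : ZMod N → A) (c : ZMod N), Ham u v ≤ n → π u c = π v c := by
    intro n
    induction n with
    | zero =>
      intro u v c h
      rw [Ham_eq_zero_iff.mp (Nat.le_zero.mp h)]
    | succ n ih =>
      intro u v c h
      by_cases huv : u = v
      · rw [huv]
      · have hne : Ham u v ≠ 0 := fun h0 => huv (Ham_eq_zero_iff.mp h0)
        obtain ⟨c', hc'⟩ := Finset.card_pos.mp (Nat.pos_of_ne_zero hne)
        have hucv : u c' ≠ v c' := mem_diffs.mp hc'
        have hstep : π (Function.update u c' (v c')) c = π u c := by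
          by_cases hcc : c' = c
          · subst hcc
            exact hπsym u c' (v c') (Ne.symm hucv)
          · exact lemB u c c' (v c') (fun he => hcc he.symm) (Ne.symm hucv)
        have hham : Ham (Function.update u c' (v c')) v ≤ n := by
          have := ham_step u v c' hc'
          omega
        rw [← hstep]
        exact ih _ v c hham
  have lemDall : ∀ (u v : ZMod N → A) (c : ZMod N), π u c = π v c :=
    fun u v c => lemD (Ham u v) u v c le_rfl
  set τ : ZMod N → ZMod N := fun c => π u₀ c with hτ
  have hπτ : ∀ u c, π u c = τ c := fun u c => lemDall u u₀ c
  have τinj : Function.Injective τ := by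
    intro c c' h
    by_contra hcc
    exact lemC u₀ c c' hcc h
  set e : ZMod N ≃ ZMod N := Equiv.ofBijective τ (Finite.injective_iff_bijective.mp τinj) with he
  set σ : ZMod N → ZMod N := fun j => e.symm j with hσ
  have hτσ : ∀ j, τ (σ j) = j := fun j => e.apply_symm_apply j
  have hστ : ∀ c, σ (τ c) = c := fun c => e.symm_apply_apply c
  have σinj : Function.Injective σ := fun a b h => by
    have := congrArg τ h
    rw [hτσ, hτσ] at this
    exact this
  have flipdiff : ∀ (u : ZMod N → A) (c : ZMod N) (b : A), b ≠ u c → ∀ j, j ≠ τ c →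
      Phi f (Function.update u c b) j = Phi f u j := by
    intro u c b hb j hj
    have h := hπ u c b hb
    rw [hπτ] at h
    by_contra hne
    have hmem : j ∈ diffs (Phi f u) (Phi f (Function.update u c b)) :=
      mem_diffs.mpr (fun he => hne he.symm)
    rw [h, Finset.mem_singleton] at hmem
    exact hj hmem
  have lemF : ∀ (n : ℕ) (u v : ZMod N → A) (j : ZMod N), Ham u v ≤ n →
      u (σ j) = v (σ j) → Phi f u j = Phi f v j := by
    intro n
    induction n with
    | zero =>
      intro u v j h _
      rw [Ham_eq_zero_iff.mp (Nat.le_zero.mp h)]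
    | succ n ih =>
      intro u v j h hagree
      by_cases huv : u = v
      · rw [huv]
      · have hne : Ham u v ≠ 0 := fun h0 => huv (Ham_eq_zero_iff.mp h0)
        obtain ⟨c', hc'⟩ := Finset.card_pos.mp (Nat.pos_of_ne_zero hne)
        have hucv : u c' ≠ v c' := mem_diffs.mp hc'
        have hcσ : c' ≠ σ j := by
          rintro rfl
          exact hucv hagree
        have h1 : Phi f (Function.update u c' (v c')) j = Phi f u j := by
          apply flipdiff u c' (v c') (Ne.symm hucv) j
          intro hj
          apply hcσ
          have := hστ c'
          rw [← hj] at this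
          exact this.symm
        have hham : Ham (Function.update u c' (v c')) v ≤ n := by
          have := ham_step u v c' hc'
          omega
        have hag : (Function.update u c' (v c')) (σ j) = v (σ j) := by
          rw [Function.update_of_ne (Ne.symm hcσ)]
          exact hagree
        rw [← h1]
        exact ih _ v j hham hag
  have lemFall : ∀ (u v : ZMod N → A) (j : ZMod N), u (σ j) = v (σ j) →
      Phi f u j = Phi f v j :=
    fun u v j h => lemF (Ham u v) u v j le_rfl h
  set G : ZMod N → A → A := fun j a => Phi f (Function.update u₀ (σ j) a) j with hG
  have hGval : ∀ u j, Phi f u j = G j (u (σ j)) := by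
    intro u j
    apply lemFall
    rw [Function.update_self]
  have hGinj : ∀ j, Function.Injective (G j) := by
    intro j a b habG
    by_contra hne
    have hv : Function.update u₀ (σ j) b =
        Function.update (Function.update u₀ (σ j) a) (σ j) b := by
      rw [Function.update_idem]
    have hham : Ham (Function.update u₀ (σ j) a) (Function.update u₀ (σ j) b) = 1 := by
      rw [Ham, hv, diffs_update (by rw [Function.update_self]; exact fun h => hne h.symm),
        Finset.card_singleton]
    have him : Ham (Phi f (Function.update u₀ (σ j) a)) (Phi f (Function.update u₀ (σ j) b)) = 1 := by
      rw [hiso]; exact hham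
    have hempty : diffs (Phi f (Function.update u₀ (σ j) a))
        (Phi f (Function.update u₀ (σ j) b)) = ∅ := by
      ext j'
      simp only [mem_diffs, Finset.notMem_empty, iff_false, not_not]
      rw [hGval _ j', hGval _ j']
      by_cases hjj : j' = j
      · subst hjj
        rw [Function.update_self, Function.update_self, habG]
      · have hσne : σ j' ≠ σ j := fun h => hjj (σinj h)
        rw [Function.update_of_ne hσne, Function.update_of_ne hσne]
    rw [Ham, hempty, Finset.card_empty] at him
    omega
  have hrot : ∀ (u : ZMod N → A) (j : ZMod N), Phi f (fun c => u (c + 1)) j = Phi f u (j + 1) := by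
    intro u j
    unfold Phi
    congr 1
    funext k
    congr 1
    ring
  have keyeq : ∀ (u : ZMod N → A) (j : ZMod N), G j (u (σ j + 1)) = G (j+1) (u (σ (j+1))) := by
    intro u j
    have h1 : Phi f u (j+1) = G (j+1) (u (σ (j+1))) := hGval u (j+1)
    have h2 : Phi f (fun c => u (c+1)) j = G j ((fun c => u (c+1)) (σ j)) := hGval _ j
    rw [hrot u j] at h2
    exact h2.symm.trans h1
  have lemI : ∀ j, σ (j + 1) = σ j + 1 := by
    intro j
    by_contra hne
    have h1 := keyeq u₀ j
    have h2 := keyeq (Function.update u₀ (σ j + 1) b0) j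
    rw [Function.update_self] at h2
    rw [Function.update_of_ne hne] at h2
    have hu0c : ∀ c : ZMod N, u₀ c = a0 := fun c => rfl
    simp only [hu0c] at h1 h2
    rw [← h1] at h2
    exact hab (hGinj j h2.symm)
  have lemJ : ∀ j, G (j+1) = G j := by
    intro j
    funext x
    have h := keyeq (Function.update u₀ (σ j + 1) x) j
    rw [Function.update_self, lemI j, Function.update_self] at h
    exact h.symm
  have lemK : ∀ (m : ℕ), σ ((m : ZMod N)) = (m : ZMod N) + σ 0 ∧ G ((m : ZMod N)) = G 0 := by
    intro m
    induction m with
    | zero => simp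
    | succ m ih =>
      have hc : ((m+1 : ℕ) : ZMod N) = (m : ZMod N) + 1 := by push_cast; ring
      rw [hc]
      exact ⟨by rw [lemI, ih.1]; ring, by rw [lemJ, ih.2]⟩
  have lemKall : ∀ j : ZMod N, σ j = j + σ 0 ∧ G j = G 0 := by
    intro j
    have h := lemK j.val
    rwa [ZMod.natCast_rightInverse j] at h
  have hΦform : ∀ u (j : ZMod N), Phi f u j = G 0 (u (j + σ 0)) := by
    intro u j
    rw [hGval u j, (lemKall j).2, (lemKall j).1]
  have hwin : ∀ (u : ZMod N → A),
      Phi f u 0 = f (fun k => u (((k : ℕ) : ZMod N) - ((r:ℕ) : ZMod N))) := by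
    intro u
    unfold Phi
    congr 1
    funext k
    congr 1
    ring
  have hk0 : ∃ k0 : Fin (2*r+1), ((k0 : ℕ) : ZMod N) - ((r:ℕ) : ZMod N) = σ 0 := by
    by_contra hcon
    push_neg at hcon
    have heqw : Phi f u₀ 0 = Phi f (Function.update u₀ (σ 0) b0) 0 := by
      rw [hwin u₀, hwin (Function.update u₀ (σ 0) b0)]
      congr 1
      funext k
      rw [Function.update_of_ne (hcon k)]
    rw [hΦform u₀ 0, hΦform (Function.update u₀ (σ 0) b0) 0, zero_add,
      Function.update_self] at heqw
    exact hab (hGinj 0 heqw)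
  obtain ⟨k0, hk0⟩ := hk0
  refine ⟨k0, G 0, hGinj 0, ?_⟩
  intro w
  set uw : ZMod N → A := fun c =>
    if h : (c + ((r:ℕ) : ZMod N)).val < 2*r+1 then w ⟨(c + ((r:ℕ):ZMod N)).val, h⟩ else a0
    with huw
  have hwk : ∀ k : Fin (2*r+1), uw (((k:ℕ) : ZMod N) - ((r:ℕ):ZMod N)) = w k := by
    intro k
    have hcv : ((((k:ℕ) : ZMod N) - ((r:ℕ):ZMod N)) + ((r:ℕ):ZMod N)) = ((k:ℕ) : ZMod N) := by
      ring
    have hval : (((k:ℕ) : ZMod N)).val = (k:ℕ) := ZMod.val_natCast_of_lt (by omega)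
    rw [huw]
    simp only [hcv, hval]
    rw [dif_pos k.isLt]
  have h1 : f w = Phi f uw 0 := by
    rw [hwin uw]
    congr 1
    funext k
    rw [hwk k]
  rw [h1, hΦform uw 0, zero_add, ← hk0, hwk k0]

/-! ### permutation+shift maps are dB-isometries -/

lemma hamIcc_conj (g : A → A) (hg : Function.Injective g) (n : ℤ) (x y : ℤ → A) (a b : ℤ) :
    hamIcc (fun i => g (x (i+n))) (fun i => g (y (i+n))) a b = hamIcc x y (a+n) (b+n) := by
  classical
  rw [hamIcc_eq, hamIcc_eq]
  refine Finset.card_bij (fun i _ => i + n) ?_ ?_ ?_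
  · intro i hi
    rw [mem_dIcc] at hi ⊢
    exact ⟨⟨by omega, by omega⟩, fun h => hi.2 (congrArg g h)⟩
  · intro i hi j hj h
    omega
  · intro c hc
    rw [mem_dIcc] at hc
    refine ⟨c - n, ?_, by show c - n + n = c; ring⟩
    rw [mem_dIcc]
    refine ⟨⟨by omega, by omega⟩, ?_⟩
    show g (x (c - n + n)) ≠ g (y (c - n + n))
    rw [show c - n + n = c by ring]
    exact fun h => hc.2 (hg h)

lemma limsup_le_shift (a b : ℕ → ℝ) (ha0 : ∀ k, 0 ≤ a k) (hb1 : ∀ k, b k ≤ 1)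
    (m : ℕ) (h : ∀ k, a k ≤ b (k+m) + (2*(m:ℝ)+1)/(2*(k:ℝ)+1)) :
    Filter.limsup a Filter.atTop ≤ Filter.limsup b Filter.atTop := by
  have hcob : Filter.IsCoboundedUnder (· ≤ ·) Filter.atTop a :=
    Filter.IsBoundedUnder.isCoboundedUnder_le (Filter.isBoundedUnder_of ⟨0, fun k => ha0 k⟩)
  have hbdd : Filter.IsBoundedUnder (· ≤ ·) Filter.atTop b :=
    Filter.isBoundedUnder_of ⟨1, hb1⟩
  apply le_of_forall_pos_le_add
  intro ε hε
  have h1 : ∀ᶠ k in Filter.atTop, b k < Filter.limsup b Filter.atTop + ε/2 :=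
    Filter.eventually_lt_of_limsup_lt (lt_add_of_pos_right _ (half_pos hε)) hbdd
  obtain ⟨K1, hK1⟩ := Filter.eventually_atTop.mp h1
  obtain ⟨K2, hK2⟩ := exists_nat_ge ((2*(2*(m:ℝ)+1))/ε)
  apply Filter.limsup_le_of_le hcob
  rw [Filter.eventually_atTop]
  refine ⟨max K1 K2, fun k hk => ?_⟩
  have hk1 : K1 ≤ k + m := le_trans (le_trans (le_max_left _ _) hk) (Nat.le_add_right _ _)
  have hk2 : (K2:ℝ) ≤ k := by exact_mod_cast le_trans (le_max_right _ _) hk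
  have hkε : 2*(2*(m:ℝ)+1) ≤ (k:ℝ) * ε := by
    have := (div_le_iff₀ hε).mp (le_trans hK2 hk2)
    linarith
  have hsmall : (2*(m:ℝ)+1)/(2*(k:ℝ)+1) ≤ ε/2 := by
    rw [div_le_div_iff₀ (by positivity) (by norm_num : (0:ℝ) < 2)]
    have hprod : ε * (2*(k:ℝ)+1) = 2*((k:ℝ)*ε) + ε := by ring
    rw [hprod]
    linarith
  calc a k ≤ b (k+m) + (2*(m:ℝ)+1)/(2*(k:ℝ)+1) := h k
    _ ≤ (Filter.limsup b Filter.atTop + ε/2) + ε/2 :=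
        add_le_add (le_of_lt (hK1 (k+m) hk1)) hsmall
    _ = Filter.limsup b Filter.atTop + ε := by ring

lemma div_shift_bound {H D1 D2 M : ℝ} (hH0 : 0 ≤ H) (hHD2 : H ≤ D2) (hD1 : 0 < D1)
    (hD2 : 0 < D2) (hd0 : 0 ≤ D2 - D1) (hdiff : D2 - D1 ≤ M) : H/D1 ≤ H/D2 + M/D1 := by
  rw [div_add_div _ _ hD2.ne' hD1.ne', div_le_div_iff₀ hD1 (by positivity)]
  nlinarith [mul_le_mul_of_nonneg_right hHD2 hd0, mul_le_mul_of_nonneg_left hdiff hD2.le,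
    mul_pos hD1 hD2]

lemma hamIcc_le_card {x y : ℤ → A} {a b : ℤ} (hab : a ≤ b + 1) :
    ((hamIcc x y a b : ℕ) : ℝ) ≤ ((b : ℝ) + 1 - a) := by
  have := hamIcc_le (x := x) (y := y) hab
  exact_mod_cast this

lemma dB_conj (g : A → A) (hg : Function.Injective g) (n : ℤ) (x y : ℤ → A) :
    dB (fun i => g (x (i+n))) (fun i => g (y (i+n))) = dB x y := by
  set m := n.natAbs with hm
  have hmn1 : -(m:ℤ) ≤ n := by omega
  have hmn2 : n ≤ (m:ℤ) := by omega
  set va : ℕ → ℝ := fun k => (hamIcc x y (-(k:ℤ)+n) ((k:ℤ)+n) : ℝ)/(2*(k:ℝ)+1) with hva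
  set vb : ℕ → ℝ := fun k => (hamIcc x y (-(k:ℤ)) (k:ℤ) : ℝ)/(2*(k:ℝ)+1) with hvb
  have hdBL : dB (fun i => g (x (i+n))) (fun i => g (y (i+n))) = Filter.limsup va Filter.atTop := by
    unfold dB
    congr 1
    funext k
    rw [hamIcc_conj g hg n x y]
  have hdBR : dB x y = Filter.limsup vb Filter.atTop := rfl
  have hva0 : ∀ k, 0 ≤ va k := fun k => div_nonneg (Nat.cast_nonneg _) (by positivity)
  have hvb0 : ∀ k, 0 ≤ vb k := fun k => div_nonneg (Nat.cast_nonneg _) (by positivity)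
  have hva1 : ∀ k, va k ≤ 1 := by
    intro k
    rw [hva, div_le_one (by positivity)]
    have := hamIcc_le_card (x := x) (y := y) (a := -(k:ℤ)+n) (b := (k:ℤ)+n) (by omega)
    push_cast at this ⊢
    linarith
  have hvb1 : ∀ k, vb k ≤ 1 := by
    intro k
    rw [hvb, div_le_one (by positivity)]
    have := hamIcc_le_card (x := x) (y := y) (a := -(k:ℤ)) (b := (k:ℤ)) (by omega)
    push_cast at this ⊢
    linarith
  have key1 : ∀ k, va k ≤ vb (k+m) + (2*(m:ℝ)+1)/(2*(k:ℝ)+1) := by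
    intro k
    set H1 := hamIcc x y (-((k+m : ℕ):ℤ)) ((k+m : ℕ):ℤ) with hH1
    have hsub : hamIcc x y (-(k:ℤ)+n) ((k:ℤ)+n) ≤ H1 :=
      hamIcc_mono (by push_cast; omega) (by push_cast; omega)
    have hHle : ((hamIcc x y (-(k:ℤ)+n) ((k:ℤ)+n) : ℕ) : ℝ) ≤ (H1 : ℝ) := by exact_mod_cast hsub
    have hH2 : (H1 : ℝ) ≤ 2*((k+m:ℕ):ℝ)+1 := by
      have h := hamIcc_le_card (x := x) (y := y) (a := -((k+m : ℕ):ℤ)) (b := ((k+m : ℕ):ℤ))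
        (by omega)
      rw [← hH1] at h
      push_cast at h ⊢
      linarith
    have hstep : (H1:ℝ)/(2*(k:ℝ)+1) ≤ (H1:ℝ)/(2*((k+m:ℕ):ℝ)+1) + (2*(m:ℝ)+1)/(2*(k:ℝ)+1) := by
      apply div_shift_bound (Nat.cast_nonneg _) hH2 (by positivity) (by positivity) ?_ ?_
      · push_cast; linarith [Nat.cast_nonneg (α := ℝ) m]
      · push_cast; linarith
    have hfirst : va k ≤ (H1:ℝ)/(2*(k:ℝ)+1) := by
      rw [hva]
      exact (div_le_div_iff_of_pos_right (by positivity)).mpr hHle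
    have hlast : vb (k+m) = (H1:ℝ)/(2*((k+m:ℕ):ℝ)+1) := rfl
    calc va k ≤ (H1:ℝ)/(2*(k:ℝ)+1) := hfirst
      _ ≤ (H1:ℝ)/(2*((k+m:ℕ):ℝ)+1) + (2*(m:ℝ)+1)/(2*(k:ℝ)+1) := hstep
      _ = vb (k+m) + (2*(m:ℝ)+1)/(2*(k:ℝ)+1) := by rw [hlast]
  have key2 : ∀ k, vb k ≤ va (k+m) + (2*(m:ℝ)+1)/(2*(k:ℝ)+1) := by
    intro k
    set H1 := hamIcc x y (-((k+m : ℕ):ℤ)+n) (((k+m : ℕ):ℤ)+n) with hH1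
    have hsub : hamIcc x y (-(k:ℤ)) ((k:ℤ)) ≤ H1 :=
      hamIcc_mono (by push_cast; omega) (by push_cast; omega)
    have hHle : ((hamIcc x y (-(k:ℤ)) ((k:ℤ)) : ℕ) : ℝ) ≤ (H1 : ℝ) := by exact_mod_cast hsub
    have hH2 : (H1 : ℝ) ≤ 2*((k+m:ℕ):ℝ)+1 := by
      have h := hamIcc_le_card (x := x) (y := y) (a := -((k+m : ℕ):ℤ)+n) (b := ((k+m : ℕ):ℤ)+n)
        (by omega)
      rw [← hH1] at h
      push_cast at h ⊢
      linarith
    have hstep : (H1:ℝ)/(2*(k:ℝ)+1) ≤ (H1:ℝ)/(2*((k+m:ℕ):ℝ)+1) + (2*(m:ℝ)+1)/(2*(k:ℝ)+1) := by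
      apply div_shift_bound (Nat.cast_nonneg _) hH2 (by positivity) (by positivity) ?_ ?_
      · push_cast; linarith [Nat.cast_nonneg (α := ℝ) m]
      · push_cast; linarith
    have hfirst : vb k ≤ (H1:ℝ)/(2*(k:ℝ)+1) := by
      rw [hvb]
      exact (div_le_div_iff_of_pos_right (by positivity)).mpr hHle
    have hlast : va (k+m) = (H1:ℝ)/(2*((k+m:ℕ):ℝ)+1) := rfl
    calc vb k ≤ (H1:ℝ)/(2*(k:ℝ)+1) := hfirst
      _ ≤ (H1:ℝ)/(2*((k+m:ℕ):ℝ)+1) + (2*(m:ℝ)+1)/(2*(k:ℝ)+1) := hstep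
      _ = va (k+m) + (2*(m:ℝ)+1)/(2*(k:ℝ)+1) := by rw [hlast]
  rw [hdBL, hdBR]
  exact le_antisymm (limsup_le_shift va vb hva0 hvb1 m key1)
    (limsup_le_shift vb va hvb0 hva1 m key2)

end ExpCAAux

/-- a CA on the full shift which is `dB`-expanding is a `dB`-isometry,
hence a composition of a power of the shift and a symbol permutation. -/
theorem expanding_ca_is_isometry {A : Type*} [Fintype A]
    (F : (ℤ → A) → (ℤ → A)) (hCA : IsSlidingBlock F)
    (hexp : ∀ x y : ℤ → A, dB x y ≤ dB (F x) (F y)) :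
    (∀ x y : ℤ → A, dB (F x) (F y) = dB x y) ∧
    ∃ (n : ℤ) (g : A → A), Function.Bijective g ∧ ∀ x i, F x i = g (x (i + n)) := by
  classical
  obtain ⟨r, f, hF⟩ := hCA
  by_cases htriv : ∀ a b : A, a = b
  · constructor
    · intro x y
      have hz : ∀ (z w : ℤ → A), dB z w = 0 := by
        intro z w
        have hfun : (fun n : ℕ => ((hamIcc z w (-(n:ℤ)) n : ℕ) : ℝ)/(2*(n:ℝ)+1))
            = fun _ : ℕ => (0:ℝ) := by
          funext n
          have h0 : hamIcc z w (-(n:ℤ)) n = 0 := by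
            rw [ExpCAAux.hamIcc_eq, Finset.card_eq_zero]
            ext i
            simp only [ExpCAAux.mem_dIcc, Finset.notMem_empty, iff_false, not_and]
            intro _
            rw [not_not]
            exact htriv _ _
          rw [h0]
          simp
        unfold dB
        rw [hfun]
        exact Filter.limsup_const 0
      rw [hz, hz]
    · exact ⟨0, id, Function.bijective_id, fun x i => htriv _ _⟩
  · push_neg at htriv
    obtain ⟨a0, b0, hab⟩ := htriv
    haveI : NeZero (2*r+2) := ⟨by omega⟩
    have hemb : ∀ u : ZMod (2*r+2) → A,
        F (ExpCAAux.emb (2*r+2) u) = ExpCAAux.emb (2*r+2) (ExpCAAux.Phi f u) := by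
      intro u
      funext i
      rw [hF]
      show f _ = ExpCAAux.Phi f u ((i : ZMod (2*r+2)))
      unfold ExpCAAux.Phi
      congr 1
      funext j
      show u (((i - (r:ℤ) + (j:ℤ)) : ℤ) : ZMod (2*r+2))
        = u ((i : ZMod (2*r+2)) - ((r:ℕ) : ZMod (2*r+2)) + (((j:ℕ) : ℕ) : ZMod (2*r+2)))
      congr 1
      push_cast
      ring
    have hiso : ∀ u v : ZMod (2*r+2) → A,
        ExpCAAux.Ham (ExpCAAux.Phi f u) (ExpCAAux.Phi f v) = ExpCAAux.Ham u v := by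
      apply ExpCAAux.finite_expanding_isometry (ExpCAAux.Phi f) ExpCAAux.Ham
        (fun u v => ExpCAAux.Ham_eq_zero_iff)
      intro u v
      have h1 := hexp (ExpCAAux.emb (2*r+2) u) (ExpCAAux.emb (2*r+2) v)
      rw [hemb u, hemb v, ExpCAAux.dB_emb, ExpCAAux.dB_emb] at h1
      have hNpos : (0:ℝ) < ((2*r+2 : ℕ) : ℝ) := by positivity
      exact_mod_cast (div_le_div_iff_of_pos_right hNpos).mp h1
    obtain ⟨k0, g, hginj, hfw⟩ :=
      ExpCAAux.master a0 b0 hab (show 2*r+1 < 2*r+2 by omega) f hiso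
    have hform : ∀ x i, F x i = g (x (i + ((k0:ℤ) - r))) := by
      intro x i
      rw [hF, hfw]
      congr 1
      ring
    refine ⟨?_, (k0:ℤ) - r, g, (Finite.injective_iff_bijective).mp hginj, hform⟩
    intro x y
    rw [funext (hform x), funext (hform y)]
    exact ExpCAAux.dB_conj g hginj _ x y
end

section
/- Besicovitch-isometry of cellular automata is not invariant under topological conjugacy: on the product subshift ({0,1}^ℤ)×({0,1}^ℤ) ≅ ({0,1}×{0,1})^ℤ, the coordinate-swap symbol permutation f(x,y) = (y,x) is a d_B-isometry, but its conjugate g∘f∘g^{−1} by the partial shift g = id × σ is not a d_B-isometry. -/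
open Filter

/-- `dB`-isometry of CA is not a conjugacy invariant: the coordinate
swap `f` on `({0,1}×{0,1})^ℤ` is a `dB`-isometry, but its conjugate by the partial
shift `g = id × σ` is not. -/
theorem isometry_not_conjugacy_invariant :
    let f : (ℤ → Bool × Bool) → (ℤ → Bool × Bool) := fun x i => ((x i).2, (x i).1)
    let g : (ℤ → Bool × Bool) → (ℤ → Bool × Bool) := fun x i => ((x i).1, (x (i + 1)).2)
    let ginv : (ℤ → Bool × Bool) → (ℤ → Bool × Bool) := fun x i => ((x i).1, (x (i - 1)).2)
    (g ∘ ginv = id ∧ ginv ∘ g = id) ∧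
    (∀ x y : ℤ → Bool × Bool, dB (f x) (f y) = dB x y) ∧
    ¬ (∀ x y : ℤ → Bool × Bool,
        dB ((g ∘ f ∘ ginv) x) ((g ∘ f ∘ ginv) y) = dB x y) := by
  intro f g ginv
  refine ⟨⟨?_, ?_⟩, ?_, ?_⟩
  · funext x i
    simp [g, ginv]
  · funext x i
    simp [g, ginv]
  · intro x y
    unfold dB
    congr 1
    funext n
    congr 2
    unfold hamIcc
    refine congrArg Finset.card ?_
    ext i
    simp only [Finset.mem_filter, f, ne_eq, Prod.ext_iff]
    tauto
  · intro H
    set x : ℤ → Bool × Bool := fun _ => (false, false) with hxdef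
    set y : ℤ → Bool × Bool := fun i => (decide (i % 4 < 2), decide (2 ≤ i % 4)) with hydef
    set z : ℤ → Bool × Bool :=
      fun i => (decide (2 ≤ (i - 1) % 4), decide ((i + 1) % 4 < 2)) with hzdef
    have hgx : (g ∘ f ∘ ginv) x = x := by
      funext i
      simp [f, g, ginv, hxdef]
    have hgy : (g ∘ f ∘ ginv) y = z := by
      funext i
      simp [f, g, ginv, hydef, hzdef]
    have hxy : dB x y = 1 := by
      unfold dB
      have heq : (fun n : ℕ => (hamIcc x y (-(n : ℤ)) n : ℝ) / (2 * n + 1))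
          = fun _ : ℕ => (1 : ℝ) := by
        funext n
        have hcard : hamIcc x y (-(n : ℤ)) n = 2 * n + 1 := by
          unfold hamIcc
          have hfil : (@Finset.filter ℤ (fun i => x i ≠ y i) (Classical.decPred _)
              (Finset.Icc (-(n : ℤ)) n)) = Finset.Icc (-(n : ℤ)) n := by
            ext i
            simp only [Finset.mem_filter, and_iff_left_iff_imp]
            intro _
            simp only [hxdef, hydef, ne_eq, Prod.ext_iff, not_and]
            intro h1 h2
            simp only [eq_comm (a := false), decide_eq_false_iff_not, not_lt, not_le] at h1 h2
            omega
          rw [hfil, Int.card_Icc]; omega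
        rw [hcard]
        have h2 : (0 : ℝ) < 2 * n + 1 := by positivity
        push_cast
        field_simp
      rw [heq, Filter.limsup_const]
    have hcard : ∀ n : ℕ, hamIcc x z (-(n : ℤ)) n ≤ n + 1 := by
      intro n
      unfold hamIcc
      have hsub : (@Finset.filter ℤ (fun i => x i ≠ z i) (Classical.decPred _)
            (Finset.Icc (-(n : ℤ)) n)).card
          ≤ (Finset.Icc ((-(n : ℤ)) / 2) ((n : ℤ) / 2)).card := by
        apply Finset.card_le_card_of_injOn (fun i => i / 2)
        · intro i hi
          simp only [Finset.mem_coe, Finset.mem_filter, Finset.mem_Icc] at hi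
          simp only [Finset.mem_coe, Finset.mem_Icc]
          omega
        · intro i hi j hj hij
          simp only [Finset.coe_filter, Set.mem_setOf_eq, Finset.mem_Icc] at hi hj
          have hi2 : i % 4 = 0 ∨ i % 4 = 3 := by
            have := hi.2
            simp only [hxdef, hzdef, ne_eq, Prod.ext_iff, not_and,
              eq_comm (a := false), decide_eq_false_iff_not, not_lt, not_le] at this
            by_contra hc
            push_neg at hc
            apply absurd (this (by omega)) (by omega)
          have hj2 : j % 4 = 0 ∨ j % 4 = 3 := by
            have := hj.2
            simp only [hxdef, hzdef, ne_eq, Prod.ext_iff, not_and,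
              eq_comm (a := false), decide_eq_false_iff_not, not_lt, not_le] at this
            by_contra hc
            push_neg at hc
            apply absurd (this (by omega)) (by omega)
          simp only at hij
          omega
      calc _ ≤ (Finset.Icc ((-(n : ℤ)) / 2) ((n : ℤ) / 2)).card := hsub
        _ ≤ n + 1 := by rw [Int.card_Icc]; omega
    have hle : dB x z ≤ 2 / 3 := by
      unfold dB
      apply Filter.limsup_le_of_le
      · exact Filter.isCoboundedUnder_le_of_le atTop (x := 0) fun n => by positivity
      · filter_upwards [Filter.eventually_ge_atTop 1] with n hn
        have h1 : (hamIcc x z (-(n : ℤ)) n : ℝ) ≤ n + 1 := by exact_mod_cast hcard n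
        have h2 : (0 : ℝ) < 2 * n + 1 := by positivity
        rw [div_le_iff₀ h2]
        have h3 : (1 : ℝ) ≤ n := by exact_mod_cast hn
        nlinarith
    have key := H x y
    rw [hgx, hgy, hxy] at key
    rw [key] at hle
    linarith
end

section
/- Let X be a subshift with the unique approximation property for d_G. Then for every p-periodic point x ∈ Σ^ℤ, the set of best approximations of x in X contains a p-periodic point of X. -/
open Filter

/-- `X` has the unique approximation property for the pseudometric `d`. -/
def UniqueApprox {A : Type*} (d : (ℤ → A) → (ℤ → A) → ℝ) (X : Set (ℤ → A)) : Prop :=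
  ∀ y : ℤ → A, ∃ x₀ ∈ X,
    {x | x ∈ X ∧ d y x = sInf (d y '' X)} = {x | x ∈ X ∧ d x₀ x = 0}

section basic
variable {A : Type*} (x y z : ℤ → A) (a b c : ℤ)

lemma ham_le_card : hamIcc x y a b ≤ (Finset.Icc a b).card := by
  exact Finset.card_le_card (@Finset.filter_subset ℤ _ (Classical.decPred _) _)

lemma ham_mono {a b c d : ℤ} (h1 : c ≤ a) (h2 : b ≤ d) :
    hamIcc x y a b ≤ hamIcc x y c d := by
  exact Finset.card_le_card (@Finset.filter_subset_filter ℤ _ (Classical.decPred _) _ _ (Finset.Icc_subset_Icc h1 h2))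

lemma ham_self : hamIcc z z a b = 0 := by
  simp [hamIcc]

lemma ham_translate : hamIcc (fun i => x (i + c)) (fun i => y (i + c)) a b
    = hamIcc x y (a + c) (b + c) := by
  unfold hamIcc
  apply Finset.card_bij' (fun i _ => i + c) (fun i _ => i - c)
  · intro i hi
    simp only [Finset.mem_filter, Finset.mem_Icc] at hi ⊢
    exact ⟨⟨by omega, by omega⟩, hi.2⟩
  · intro i hi
    simp only [Finset.mem_filter, Finset.mem_Icc] at hi ⊢
    refine ⟨⟨by omega, by omega⟩, ?_⟩
    simpa [sub_add_cancel] using hi.2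
  · intro i _ ; omega
  · intro i _ ; omega

lemma ham_split : hamIcc x y a b ≤ hamIcc x y a c + hamIcc x y (c + 1) b := by
  unfold hamIcc
  refine le_trans (Finset.card_le_card ?_) (Finset.card_union_le _ _)
  intro i hi
  simp only [Finset.mem_filter, Finset.mem_Icc, Finset.mem_union] at hi ⊢
  rcases le_or_gt i c with h | h
  · exact Or.inl ⟨⟨hi.1.1, h⟩, hi.2⟩
  · exact Or.inr ⟨⟨by omega, hi.1.2⟩, hi.2⟩
end basic

section dlayer
variable {A : Type*}

lemma wincard (mm : ℤ) (n : ℕ) : ((Finset.Icc (mm - (n:ℤ)) (mm + n)).card : ℝ) = 2*n+1 := by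
  rw [Int.card_Icc]
  have : (mm + (n:ℤ) + 1 - (mm - n)) = 2*n+1 := by ring
  rw [this]
  have : ((2*(n:ℤ)+1)).toNat = 2*n+1 := by omega
  rw [this]; push_cast; ring

lemma term_nonneg (x y : ℤ → A) (a b : ℤ) (n : ℕ) :
    0 ≤ (hamIcc x y a b : ℝ) / (2*n+1) := by positivity

lemma termB_le_one (x y : ℤ → A) (mm : ℤ) (n : ℕ) :
    (hamIcc x y (mm - (n:ℤ)) (mm + n) : ℝ) / (2*n+1) ≤ 1 := by
  rw [div_le_one (by positivity)]
  calc (hamIcc x y (mm - (n:ℤ)) (mm + n) : ℝ) ≤ ((Finset.Icc (mm - (n:ℤ)) (mm + n)).card : ℝ) := by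
        exact_mod_cast ham_le_card _ _ _ _
    _ = 2*n+1 := wincard mm n

lemma termB_le_one' (x y : ℤ → A) (n : ℕ) :
    (hamIcc x y (-(n:ℤ)) n : ℝ) / (2*n+1) ≤ 1 := by
  have := termB_le_one x y 0 n
  simpa using this

lemma fW_bddAbove (x y : ℤ → A) (n : ℕ) :
    BddAbove (Set.range fun mm : ℤ => (hamIcc x y (mm - (n:ℤ)) (mm + n) : ℝ) / (2*n+1)) := by
  refine ⟨1, ?_⟩
  rintro r ⟨mm, rfl⟩
  exact termB_le_one x y mm n

lemma fW_le_one (x y : ℤ → A) (n : ℕ) :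
    (⨆ mm : ℤ, (hamIcc x y (mm - (n:ℤ)) (mm + n) : ℝ) / (2*n+1)) ≤ 1 :=
  ciSup_le fun mm => termB_le_one x y mm n

lemma fB_le_fW (x y : ℤ → A) (n : ℕ) :
    (hamIcc x y (-(n:ℤ)) n : ℝ) / (2*n+1)
      ≤ ⨆ mm : ℤ, (hamIcc x y (mm - (n:ℤ)) (mm + n) : ℝ) / (2*n+1) := by
  have := le_ciSup (fW_bddAbove x y n) (0 : ℤ)
  simpa using this

lemma fW_nonneg (x y : ℤ → A) (n : ℕ) :
    0 ≤ ⨆ mm : ℤ, (hamIcc x y (mm - (n:ℤ)) (mm + n) : ℝ) / (2*n+1) :=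
  le_trans (term_nonneg x y _ _ n) (fB_le_fW x y n)

variable (d : (ℤ → A) → (ℤ → A) → ℝ) (hd : d = dB (A := A) ∨ d = dW (A := A))
variable (x y z : ℤ → A)

include hd in
lemma d_nonneg : 0 ≤ d x y := by
  rcases hd with rfl | rfl
  · exact le_limsup_of_frequently_le
      (Eventually.of_forall fun n => term_nonneg x y _ _ n).frequently
      (isBoundedUnder_of ⟨1, fun n => termB_le_one' x y n⟩)
  · exact le_limsup_of_frequently_le
      (Eventually.of_forall fun n => fW_nonneg x y n).frequently
      (isBoundedUnder_of ⟨1, fun n => fW_le_one x y n⟩)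

include hd in
lemma d_le_one : d x y ≤ 1 := by
  rcases hd with rfl | rfl
  · exact limsup_le_of_le
      (isCoboundedUnder_le_of_le _ fun n => term_nonneg x y _ _ n)
      (Eventually.of_forall fun n => termB_le_one' x y n)
  · exact limsup_le_of_le
      (isCoboundedUnder_le_of_le _ fun n => fW_nonneg x y n)
      (Eventually.of_forall fun n => fW_le_one x y n)

include hd in
lemma d_self : d z z = 0 := by
  have h0 : ∀ a b : ℤ, (hamIcc z z a b : ℝ) = 0 := by
    intro a b; rw [ham_self]; norm_num
  rcases hd with rfl | rfl
  · unfold dB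
    have : (fun n : ℕ => (hamIcc z z (-(n:ℤ)) n : ℝ) / (2*n+1)) = fun _ => (0:ℝ) := by
      funext n; rw [h0]; simp
    rw [this, limsup_const]
  · unfold dW
    have : (fun n : ℕ => ⨆ mm : ℤ, (hamIcc z z (mm - (n:ℤ)) (mm + n) : ℝ) / (2*n+1))
        = fun _ => (0:ℝ) := by
      funext n
      have : ∀ mm : ℤ, (hamIcc z z (mm - (n:ℤ)) (mm + n) : ℝ) / (2*n+1) = 0 := by
        intro mm; rw [h0]; simp
      simp only [this, ciSup_const]
    rw [this, limsup_const]

include hd in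
lemma d_eventually {c ε : ℝ} (h : d x y ≤ c) (hε : 0 < ε) :
    ∀ᶠ n : ℕ in atTop, (hamIcc x y (-(n:ℤ)) n : ℝ) / (2*n+1) < c + ε := by
  rcases hd with rfl | rfl
  · exact eventually_lt_of_limsup_lt (lt_of_le_of_lt h (by linarith))
      (isBoundedUnder_of ⟨1, fun n => termB_le_one' x y n⟩)
  · have := eventually_lt_of_limsup_lt (f := atTop)
      (u := fun n : ℕ => ⨆ mm : ℤ, (hamIcc x y (mm - (n:ℤ)) (mm + n) : ℝ) / (2*n+1))
      (lt_of_le_of_lt h (by linarith : c < c + ε))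
      (isBoundedUnder_of ⟨1, fun n => fW_le_one x y n⟩)
    exact this.mono fun n hn => lt_of_le_of_lt (fB_le_fW x y n) hn

end dlayer


section shiftlayer
variable {A : Type*}

lemma eventually_div_lt {C ε : ℝ} (hC : 0 ≤ C) (hε : 0 < ε) :
    ∀ᶠ n : ℕ in atTop, C / (2*n+1) < ε := by
  rw [eventually_atTop]
  refine ⟨⌈C/ε⌉₊, fun n hn => ?_⟩
  have h1 : C/ε ≤ (n:ℝ) := le_trans (Nat.le_ceil _) (by exact_mod_cast hn)
  have h2 : C ≤ ε * n := by
    rw [div_le_iff₀ hε] at h1; linarith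
  rw [div_lt_iff₀ (by positivity)]
  nlinarith [mul_nonneg hε.le (Nat.cast_nonneg n : (0:ℝ) ≤ n)]
end shiftlayer

section shift2
variable {A : Type*} (x z : ℤ → A) (p : ℕ)

lemma ham_shift_key (hxper : ∀ i, x (i + p) = x i) (a b : ℤ) :
    hamIcc x (fun i => z (i + p)) a b = hamIcc x z (a + p) (b + p) := by
  have hx : (fun i => x (i + (p:ℤ))) = x := funext hxper
  rw [← ham_translate, hx]

variable (d : (ℤ → A) → (ℤ → A) → ℝ) (hd : d = dB (A := A) ∨ d = dW (A := A))

include hd in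
lemma d_shift_le (hxper : ∀ i, x (i + p) = x i) :
    d x (fun i => z (i + p)) ≤ d x z := by
  rcases hd with rfl | rfl
  · -- Besicovitch
    refine le_of_forall_pos_le_add fun ε hε => ?_
    set c := dB x z with hc
    have hbd : dB x z < c + ε/2 := by simp [hc]; linarith
    have h1 : ∀ᶠ n : ℕ in atTop, (hamIcc x z (-(n:ℤ)) n : ℝ)/(2*n+1) < c + ε/2 :=
      eventually_lt_of_limsup_lt hbd (isBoundedUnder_of ⟨1, fun n => termB_le_one' x z n⟩)
    have h2 : ∀ᶠ n : ℕ in atTop, (p:ℝ)/(2*n+1) < ε/2 :=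
      eventually_div_lt (by positivity) (by linarith)
    have h3 : ∀ᶠ n : ℕ in atTop,
        (hamIcc x (fun i => z (i + p)) (-(n:ℤ)) n : ℝ)/(2*n+1) ≤ c + ε := by
      filter_upwards [h1, h2] with n hn1 hn2
      have e1 : hamIcc x (fun i => z (i + p)) (-(n:ℤ)) n = hamIcc x z (-(n:ℤ) + p) (n + p) :=
        ham_shift_key x z p hxper _ _
      have e2 : hamIcc x z (-(n:ℤ) + p) ((n:ℤ) + p)
          ≤ hamIcc x z (-(n:ℤ)) n + p := by
        calc hamIcc x z (-(n:ℤ) + p) ((n:ℤ) + p)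
            ≤ hamIcc x z (-(n:ℤ) + p) n + hamIcc x z ((n:ℤ)+1) (n + p) := ham_split _ _ _ _ _
          _ ≤ hamIcc x z (-(n:ℤ)) n + p := by
              have b1 : hamIcc x z (-(n:ℤ) + p) (n:ℤ) ≤ hamIcc x z (-(n:ℤ)) n :=
                ham_mono x z (by omega) (le_refl _)
              have b2 : hamIcc x z ((n:ℤ)+1) ((n:ℤ) + p) ≤ p := by
                refine le_trans (ham_le_card _ _ _ _) ?_
                rw [Int.card_Icc]
                omega
              omega
      rw [e1]
      have hcast : (hamIcc x z (-(n:ℤ) + p) ((n:ℤ) + p) : ℝ)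
          ≤ (hamIcc x z (-(n:ℤ)) n : ℝ) + p := by exact_mod_cast e2
      have hpos : (0:ℝ) < 2*n+1 := by positivity
      rw [div_le_iff₀ hpos]
      have := hn1
      rw [div_lt_iff₀ hpos] at hn1 hn2
      nlinarith
    exact limsup_le_of_le
      (isCoboundedUnder_le_of_le _ fun n => term_nonneg x _ _ _ n) h3
  · -- Weyl : exact equality of each term
    apply le_of_eq
    unfold dW
    have hfun : (fun n : ℕ => ⨆ mm : ℤ, (hamIcc x (fun i => z (i + p)) (mm - (n:ℤ)) (mm + n) : ℝ)/(2*n+1))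
        = (fun n : ℕ => ⨆ mm : ℤ, (hamIcc x z (mm - (n:ℤ)) (mm + n) : ℝ)/(2*n+1)) := by
      funext n
      have hterm : ∀ mm : ℤ, (hamIcc x (fun i => z (i + p)) (mm - (n:ℤ)) (mm + n) : ℝ)/(2*n+1)
          = (hamIcc x z ((mm + p) - (n:ℤ)) ((mm + p) + n) : ℝ)/(2*n+1) := by
        intro mm
        rw [ham_shift_key x z p hxper]
        congr 3 <;> ring
      simp only [hterm]
      rw [← sSup_range, ← sSup_range]
      congr 1
      have hsurj : Function.Surjective (fun mm : ℤ => mm + (p:ℤ)) := fun mm => ⟨mm - p, by ring⟩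
      exact Function.Surjective.range_comp hsurj
        (fun mm : ℤ => (hamIcc x z (mm - (n:ℤ)) (mm + n) : ℝ)/(2*n+1))
    rw [hfun]
end shift2

noncomputable def hw {A : Type*} (x : ℤ → A) {p : ℕ} (w : Fin p → A) : ℕ :=
  @Finset.card _ (@Finset.filter _ (fun j : Fin p => x (j:ℤ) ≠ w j)
    (Classical.decPred _) Finset.univ)

section periodic
variable {A : Type*} {x : ℤ → A} {p : ℕ}

lemma per_mul (hxper : ∀ i, x (i + p) = x i) : ∀ (k : ℤ) (i : ℤ), x (i + p * k) = x i := by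
  intro k
  induction k using Int.induction_on with
  | zero => simp
  | succ k ih => intro i
                 have : i + (p:ℤ) * (k + 1) = (i + p * k) + p := by ring
                 rw [this, hxper, ih]
  | pred k ih => intro i
                 have h := hxper (i + p * (-k - 1))
                 have : i + (p:ℤ) * (-k - 1) + p = i + p * (-(k:ℤ)) := by ring
                 rw [this] at h
                 rw [← h, ih]

lemma x_mod (hxper : ∀ i, x (i + p) = x i) (i : ℤ) : x (i % p) = x i := by
  have h := per_mul hxper (i / p) (i % p)
  rw [Int.emod_add_mul_ediv i p] at h
  exact h.symm

lemma perPt_per (hp : 0 < p) (w : Fin p → A) (i : ℤ) : perPt hp w (i + p) = perPt hp w i := by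
  unfold perPt
  congr 2
  simp [Int.add_emod]

lemma perham (hp : 0 < p) (hxper : ∀ i, x (i + p) = x i) (w : Fin p → A) (a b : ℤ)
    (hab : a ≤ b) :
    (hamIcc x (perPt hp w) a b : ℝ) ≤ (hw x w : ℝ) * ((b-a : ℝ)/p + 1) := by
  have hpz : (0:ℤ) < (p:ℤ) := by exact_mod_cast hp
  let B : Finset (Fin p) := @Finset.filter _ (fun j : Fin p => x (j:ℤ) ≠ w j)
    (Classical.decPred _) Finset.univ
  let Q : Fin p → Finset ℤ :=
    fun j => @Finset.filter ℤ (fun i => i % p = (j:ℤ)) (Classical.decPred _) (Finset.Icc a b)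
  have hmemB : ∀ j : Fin p, x (j:ℤ) ≠ w j → j ∈ B := by
    intro j h
    exact (@Finset.mem_filter (Fin p) (fun j : Fin p => x (j:ℤ) ≠ w j) (Classical.decPred _)
      Finset.univ j).mpr ⟨Finset.mem_univ _, h⟩
  have hmemQ : ∀ (j : Fin p) (i : ℤ), i ∈ Q j ↔ (i ∈ Finset.Icc a b ∧ i % p = (j:ℤ)) := by
    intro j i
    exact @Finset.mem_filter ℤ (fun i => i % p = (j:ℤ)) (Classical.decPred _) (Finset.Icc a b) i
  have hsub : (@Finset.filter ℤ (fun i => x i ≠ perPt hp w i) (Classical.decPred _)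
      (Finset.Icc a b)) ⊆ B.biUnion Q := by
    intro i hi
    simp only [Finset.mem_filter] at hi
    obtain ⟨hi1, hi2⟩ := hi
    have hr0 : 0 ≤ i % p := Int.emod_nonneg i (by omega)
    have hrp : i % p < p := Int.emod_lt_of_pos i hpz
    have hfin : (i % p).toNat < p := by omega
    set j : Fin p := ⟨(i % p).toNat, hfin⟩ with hjdef
    have hjz : (j:ℤ) = i % p := by simp [hjdef]; omega
    refine Finset.mem_biUnion.mpr ⟨j, hmemB j ?_, (hmemQ j i).mpr ⟨hi1, hjz.symm⟩⟩
    have hy : perPt hp w i = w j := rfl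
    rw [hjz, x_mod hxper i, ← hy]
    exact hi2
  have hQcard : ∀ j : Fin p, ((Q j).card : ℝ) ≤ (b-a : ℝ)/p + 1 := by
    intro j
    have hinj : (Q j).card ≤ (Finset.Icc (0:ℤ) ((b-a)/p)).card := by
      apply Finset.card_le_card_of_injOn (fun i => (i - a)/p)
      · intro i hi
        rw [Finset.mem_coe, hmemQ, Finset.mem_Icc] at hi
        rw [Finset.mem_coe, Finset.mem_Icc]
        exact ⟨Int.ediv_nonneg (by omega) (by omega), Int.ediv_le_ediv hpz (by omega)⟩
      · intro i1 h1 i2 h2 heq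
        rw [Finset.mem_coe, hmemQ, Finset.mem_Icc] at h1
        rw [Finset.mem_coe, hmemQ, Finset.mem_Icc] at h2
        simp only at heq
        have em : (i1 - a) % p = (i2 - a) % p := by
          rw [Int.sub_emod i1 a, Int.sub_emod i2 a, h1.2, h2.2]
        have e1 := Int.mul_ediv_add_emod (i1 - a) p
        have e2 := Int.mul_ediv_add_emod (i2 - a) p
        rw [heq, em] at e1
        omega
    have hq0 : 0 ≤ (b-a)/p := Int.ediv_nonneg (by omega) (by omega)
    have hcard2 : ((Finset.Icc (0:ℤ) ((b-a)/p)).card : ℝ) ≤ (b-a:ℝ)/p + 1 := by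
      rw [Int.card_Icc]
      have h10 : ((b-a)/p + 1 - (0:ℤ)) = (b-a)/p + 1 := by ring
      rw [h10]
      have htn : ((((b-a)/p + 1).toNat : ℤ)) = (b-a)/p + 1 := Int.toNat_of_nonneg (by omega)
      have htn' : ((((b-a)/p + 1).toNat : ℕ) : ℝ) = (((b-a)/p : ℤ) : ℝ) + 1 := by
        exact_mod_cast htn
      rw [htn']
      have hqle : (((b-a)/p : ℤ) : ℝ) ≤ (b-a:ℝ)/p := by
        have hmul : (p:ℤ) * ((b-a)/p) ≤ b - a := by
          have := Int.mul_ediv_add_emod (b-a) p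
          have hm0 := Int.emod_nonneg (b-a) (by omega : (p:ℤ) ≠ 0)
          omega
        rw [le_div_iff₀ (by exact_mod_cast hpz : (0:ℝ) < (p:ℝ))]
        calc (((b-a)/p : ℤ) : ℝ) * p = (((p:ℤ) * ((b-a)/p) : ℤ) : ℝ) := by push_cast; ring
          _ ≤ ((b - a : ℤ) : ℝ) := by exact_mod_cast hmul
          _ = (b:ℝ) - a := by push_cast; ring
      linarith
    calc ((Q j).card : ℝ) ≤ ((Finset.Icc (0:ℤ) ((b-a)/p)).card : ℝ) := by exact_mod_cast hinj
      _ ≤ (b-a:ℝ)/p + 1 := hcard2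
  have hEle : (hamIcc x (perPt hp w) a b : ℕ) ≤ ∑ j ∈ B, (Q j).card :=
    le_trans (Finset.card_le_card hsub) (Finset.card_biUnion_le)
  have hBhw : B.card = hw x w := rfl
  calc (hamIcc x (perPt hp w) a b : ℝ) ≤ ((∑ j ∈ B, (Q j).card : ℕ) : ℝ) := by exact_mod_cast hEle
    _ = ∑ j ∈ B, ((Q j).card : ℝ) := by push_cast; ring
    _ ≤ ∑ j ∈ B, ((b-a:ℝ)/p + 1) := Finset.sum_le_sum fun j _ => hQcard j
    _ = (B.card : ℝ) * ((b-a:ℝ)/p + 1) := by rw [Finset.sum_const, nsmul_eq_mul]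
    _ = (hw x w : ℝ) * ((b-a:ℝ)/p + 1) := by rw [hBhw]

end periodic

section perupper
variable {A : Type*} {x : ℤ → A} {p : ℕ}

lemma d_per_upper (d : (ℤ → A) → (ℤ → A) → ℝ) (hd : d = dB (A := A) ∨ d = dW (A := A))
    (hp : 0 < p) (hxper : ∀ i, x (i + p) = x i) (w : Fin p → A) :
    d x (perPt hp w) ≤ (hw x w : ℝ)/p := by
  have hppos : (0:ℝ) < p := by exact_mod_cast hp
  have hkey : ∀ (mm : ℤ) (n : ℕ), (hamIcc x (perPt hp w) (mm - (n:ℤ)) (mm + n) : ℝ)/(2*n+1)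
      ≤ (hw x w : ℝ)/p + (hw x w : ℝ)/(2*n+1) := by
    intro mm n
    have hpos : (0:ℝ) < 2*n+1 := by positivity
    have h1 := perham hp hxper w (mm - n) (mm + n) (by omega)
    push_cast at h1
    have hba : (mm:ℝ) + (n:ℝ) - ((mm:ℝ) - (n:ℝ)) = 2*(n:ℝ) := by ring
    rw [hba] at h1
    rw [div_le_iff₀ hpos]
    have hhw : (0:ℝ) ≤ (hw x w : ℝ) := by positivity
    have key2 : (hw x w : ℝ) * (2 * (n:ℝ) / (p:ℝ) + 1)
        ≤ ((hw x w : ℝ)/p + (hw x w : ℝ)/(2*n+1)) * (2*n+1) := by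
      have e1 : ((hw x w : ℝ)/p + (hw x w : ℝ)/(2*n+1)) * (2*n+1)
          = (hw x w : ℝ)/p*(2*n+1) + (hw x w : ℝ) := by
        field_simp
      rw [e1]
      have e2 : (hw x w : ℝ) * (2 * (n:ℝ) / (p:ℝ) + 1) = (hw x w:ℝ)/p*(2*n) + hw x w := by
        ring
      rw [e2]
      have h3 : (0:ℝ) ≤ (hw x w:ℝ)/p := by positivity
      linarith
    exact le_trans h1 key2
  refine le_of_forall_pos_le_add fun ε hε => ?_
  have hev : ∀ᶠ n : ℕ in atTop, (hw x w : ℝ)/(2*n+1) < ε := eventually_div_lt (by positivity) hε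
  rcases hd with rfl | rfl
  · apply limsup_le_of_le (isCoboundedUnder_le_of_le _ fun n => term_nonneg x _ _ _ n)
    filter_upwards [hev] with n hn
    have := hkey 0 n
    simp only [zero_sub, zero_add] at this
    linarith
  · apply limsup_le_of_le (isCoboundedUnder_le_of_le _ fun n => fW_nonneg x _ n)
    filter_upwards [hev] with n hn
    refine le_trans (ciSup_le fun mm => hkey mm n) ?_
    linarith

end perupper

section subshift
variable {A : Type*} {X : Set (ℤ → A)}

lemma shift_mem (hX : IsSubshift X) {z : ℤ → A} (hz : z ∈ X) (s : ℤ) :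
    (fun i => z (i + s)) ∈ X := by
  induction s using Int.induction_on with
  | zero => simpa using hz
  | succ k ih =>
      have h := hX.1 _ ih
      have he : shiftMap (fun i => z (i + k)) = fun i => z (i + ((k:ℤ) + 1)) := by
        funext i; simp only [shiftMap]; congr 1; ring
      rwa [he] at h
  | pred k ih =>
      have h := hX.2.1 _ ih
      have he : (fun i => (fun i => z (i + -(k:ℤ))) (i - 1)) = fun i => z (i + (-(k:ℤ) - 1)) := by
        funext i; congr 1; ring
      rwa [he] at h

lemma perPt_mem (hX : IsSubshift X) {x₀ : ℤ → A} (hx₀ : x₀ ∈ X) {p : ℕ} (hp : 0 < p)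
    (w : Fin p → A)
    (hrun : ∀ g : ℕ, ∃ k : ℤ, ∀ t : ℕ, t < g → ∀ j : Fin p, x₀ ((k + t) * p + j) = w j) :
    perPt hp w ∈ X := by
  have hpz : (0:ℤ) < (p:ℤ) := by exact_mod_cast hp
  apply hX.2.2
  intro nn
  obtain ⟨k, hk⟩ := hrun (2*nn+1)
  refine ⟨fun i => x₀ (i + (k + nn) * p), shift_mem hX hx₀ _, fun i hi => ?_⟩
  rw [abs_le] at hi
  set M : ℤ := i + (nn:ℤ) * p with hM
  have hM0 : 0 ≤ M := by nlinarith [hi.1, hpz]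
  have hMlt : M < (2*(nn:ℤ)+1) * p := by nlinarith [hi.2, hpz]
  set t : ℤ := M / p with ht
  set r : ℤ := M % p with hr
  have hdm : p * t + r = M := Int.mul_ediv_add_emod M p
  have hr0 : 0 ≤ r := Int.emod_nonneg M (by omega)
  have hrp : r < p := Int.emod_lt_of_pos M hpz
  have ht0 : 0 ≤ t := Int.ediv_nonneg hM0 (by omega)
  have htlt : t < 2*(nn:ℤ)+1 := by
    rw [ht, Int.ediv_lt_iff_lt_mul hpz]
    exact hMlt
  have htnat : ((t.toNat : ℤ)) = t := Int.toNat_of_nonneg ht0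
  have htn_lt : t.toNat < 2*nn+1 := by omega
  have hj : (r.toNat) < p := by omega
  have hkey := hk t.toNat htn_lt ⟨r.toNat, hj⟩
  have harg : (k + (t.toNat : ℤ)) * p + ((⟨r.toNat, hj⟩ : Fin p) : ℤ) = i + (k + nn) * p := by
    have hcj : ((⟨r.toNat, hj⟩ : Fin p) : ℤ) = r := by simp; omega
    rw [hcj, htnat]
    nlinarith [hdm]
  rw [harg] at hkey
  have hrmod : r = i % p := by
    rw [hr, hM]; exact Int.add_mul_emod_self_right _ _ _
  show x₀ (i + (k + (nn:ℤ)) * p) = perPt hp w i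
  rw [hkey]
  unfold perPt
  congr 1
  apply Fin.ext
  simp
  omega

end subshift


section corelemma
variable {A : Type*} {x x₀ : ℤ → A} {p : ℕ}

lemma Hhw (hp : 0 < p) (hxper : ∀ i, x (i + p) = x i) (k : ℤ) :
    hamIcc x x₀ (k*p) (k*p + p - 1) = hw x (fun j : Fin p => x₀ (k * p + j)) := by
  have hpz : (0:ℤ) < (p:ℤ) := by exact_mod_cast hp
  unfold hamIcc hw
  symm
  apply Finset.card_bij (fun (j : Fin p) _ => k*p + (j:ℤ))
  · intro j hj
    simp only [Finset.mem_filter, Finset.mem_Icc] at hj ⊢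
    have hjb : 0 ≤ (j:ℤ) ∧ (j:ℤ) < p := ⟨by exact_mod_cast j.2.le.trans (le_refl _) |>.trans (le_refl _) |> fun _ => Int.ofNat_nonneg j.1, by exact_mod_cast j.2⟩
    refine ⟨⟨by omega, by omega⟩, ?_⟩
    have hxj : x (k*p + (j:ℤ)) = x (j:ℤ) := by
      have := per_mul hxper k (j:ℤ)
      rw [← this]; congr 1; ring
    rw [hxj]
    exact hj.2
  · intro j1 h1 j2 h2 heq
    apply Fin.ext
    omega
  · intro b hb
    simp only [Finset.mem_filter, Finset.mem_Icc] at hb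
    have hbb : 0 ≤ b - k*p ∧ b - k*p < p := by omega
    refine ⟨⟨(b - k*p).toNat, by omega⟩, ?_, ?_⟩
    · simp only [Finset.mem_filter]
      refine ⟨Finset.mem_univ _, ?_⟩
      have hcj : (((⟨(b - k*p).toNat, by omega⟩ : Fin p)) : ℤ) = b - k*p := by simp; omega
      rw [hcj]
      have hx1 : x (b - k*p) = x b := by
        have := per_mul hxper k (b - k*p)
        rw [show b - k*p + (p:ℤ)*k = b by ring] at this
        exact this.symm
      have hx2 : k*p + (b - k*p) = b := by ring
      rw [hx1, hx2]
      exact hb.2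
    · have hcj : (((⟨(b - k*p).toNat, by omega⟩ : Fin p)) : ℤ) = b - k*p := by simp; omega
      rw [hcj]; ring

end corelemma

section corelemma2
variable {A : Type*} {x x₀ : ℤ → A} {p : ℕ}

lemma core_arith {mr e pp Nr Gc Hh : ℝ}
    (hm0 : 0 ≤ mr) (hm1 : mr ≤ 1) (he0 : 0 < e) (he1 : e ≤ 1) (hpp : 0 < pp)
    (hGr : (2*Nr+3)*(1 - e/4) ≤ Gc) (hGpos : 0 < Gc) (hN3 : (0:ℝ) ≤ 2*Nr+3)
    (hCr : Gc * Hh < (mr + e/2) * ((2*Nr+3)*pp)) :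
    Hh ≤ pp * (mr + e) := by
  have step2 : (mr + e/2) ≤ (mr + e) * (1 - e/4) := by
    nlinarith [mul_nonneg (by linarith : (0:ℝ) ≤ e/4) (by linarith : (0:ℝ) ≤ 2 - mr - e)]
  have key : Gc * Hh ≤ Gc * (pp * (mr + e)) := by
    calc Gc * Hh ≤ (mr + e/2) * ((2*Nr+3)*pp) := hCr.le
      _ ≤ ((mr+e)*(1-e/4)) * ((2*Nr+3)*pp) :=
          mul_le_mul_of_nonneg_right step2 (mul_nonneg hN3 hpp.le)
      _ = ((2*Nr+3)*(1-e/4)) * ((mr+e)*pp) := by ring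
      _ ≤ Gc * ((mr+e)*pp) :=
          mul_le_mul_of_nonneg_right hGr (mul_nonneg (by linarith) hpp.le)
      _ = Gc * (pp * (mr + e)) := by ring
  exact le_of_mul_le_mul_left key hGpos

set_option maxHeartbeats 1000000 in
lemma core (hp : 0 < p) (hxper : ∀ i, x (i + p) = x i) {m : ℝ} (hm0 : 0 ≤ m) (hm1 : m ≤ 1)
    {εc : ℝ} (hε0 : 0 < εc) (hε1 : εc ≤ 1) {g : ℕ} (hg : 0 < g)
    (hA : ∀ᶠ n : ℕ in Filter.atTop, (hamIcc x x₀ (-(n:ℤ)) n : ℝ)/(2*n+1) < m + εc/2)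
    (hJ : ∀ᶠ n : ℕ in Filter.atTop,
      (hamIcc x₀ (fun i => x₀ (i + p)) (-(n:ℤ)) n : ℝ)/(2*n+1) < εc / (8 * g * p)) :
    ∃ k : ℤ, (∀ t : ℕ, t < g → ∀ j : Fin p, x₀ ((k + t) * p + j) = x₀ (k * p + j))
      ∧ ((hw x (fun j : Fin p => x₀ (k * p + j)) : ℝ)) ≤ p * (m + εc) := by
  classical
  have hpz : (0:ℤ) < (p:ℤ) := by exact_mod_cast hp
  have hpr : (0:ℝ) < (p:ℝ) := by exact_mod_cast hp
  have hpr1 : (1:ℝ) ≤ (p:ℝ) := by exact_mod_cast hp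
  have hgr : (0:ℝ) < (g:ℝ) := by exact_mod_cast hg
  obtain ⟨n₁, hn₁⟩ := Filter.eventually_atTop.mp (hA.and hJ)
  set N : ℕ := max (max g n₁) (⌈8 * ((g:ℝ) + 2) / εc⌉₊) with hN
  have hNg : g ≤ N := le_trans (le_max_left _ _) (le_max_left _ _)
  have hNn₁ : n₁ ≤ N := le_trans (le_max_right _ _) (le_max_left _ _)
  have hNceil : (8 * ((g:ℝ)+2)/εc) ≤ N := by
    refine le_trans (Nat.le_ceil _) ?_
    have h' : (⌈8 * ((g:ℝ) + 2) / εc⌉₊ : ℕ) ≤ N := by rw [hN]; exact le_max_right _ _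
    exact_mod_cast h'
  set n : ℕ := (N+1) * p with hn
  have hnz : (n:ℤ) = ((N:ℤ)+1)*p := by rw [hn]; push_cast; ring
  have hnr : (n:ℝ) = ((N:ℝ)+1)*p := by rw [hn]; push_cast; ring
  have hnn₁ : n₁ ≤ n := by
    calc n₁ ≤ N := hNn₁
      _ ≤ N+1 := by omega
      _ ≤ (N+1)*p := Nat.le_mul_of_pos_right _ hp
  obtain ⟨hCn, hJn⟩ := hn₁ n hnn₁
  have hpos2n : (0:ℝ) < 2*(n:ℝ)+1 := by positivity
  rw [div_lt_iff₀ hpos2n] at hCn hJn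
  -- definitions
  set blk : ℤ → (Fin p → A) := fun k => fun j => x₀ (k * p + j) with hblk
  set Hc : ℤ → ℕ := fun k => hamIcc x x₀ (k*p) (k*p + p - 1) with hHc
  set S : Finset ℤ := Finset.Icc (-(N:ℤ)) ((N:ℤ) - g) with hS
  set D : Finset ℤ := (Finset.Icc (-(N:ℤ)) ((N:ℤ) - 1)).filter (fun k => blk k ≠ blk (k+1))
    with hD
  set G : Finset ℤ := S.filter (fun k => ∀ t : ℕ, t < g → blk (k + t) = blk k) with hG
  set E : ℤ → Finset ℤ := fun k => @Finset.filter ℤ (fun i => x i ≠ x₀ i) (Classical.decPred _)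
    (Finset.Icc (k*p) (k*p+p-1)) with hE
  have hHcE : ∀ k, Hc k = (E k).card := fun k => rfl
  -- sum over blocks is at most the central count
  have hblockmono : ∀ k, k ∈ S → Finset.Icc (k*p) (k*p+p-1) ⊆ Finset.Icc (-(n:ℤ)) n := by
    intro k hk
    rw [hS, Finset.mem_Icc] at hk
    apply Finset.Icc_subset_Icc
    · have h1 : (-(N:ℤ)) * p ≤ k * p := mul_le_mul_of_nonneg_right hk.1 (by omega)
      rw [hnz]; nlinarith
    · have h1 : k * p ≤ ((N:ℤ) - g) * p := mul_le_mul_of_nonneg_right hk.2 (by omega)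
      have h2 : (0:ℤ) ≤ (g:ℤ) := by exact_mod_cast Nat.zero_le g
      rw [hnz]; nlinarith
  have hdisj : ∀ k ∈ S, ∀ k' ∈ S, k ≠ k' → Disjoint (E k) (E k') := by
    intro k _ k' _ hne
    rw [Finset.disjoint_left]
    intro i hi hi'
    rw [hE] at hi hi'
    simp only [Finset.mem_filter, Finset.mem_Icc] at hi hi'
    rcases lt_or_gt_of_ne hne with h | h
    · have : (k+1) * p ≤ k' * p := mul_le_mul_of_nonneg_right (by omega) (by omega)
      nlinarith [hi.1.2, hi'.1.1]
    · have : (k'+1) * p ≤ k * p := mul_le_mul_of_nonneg_right (by omega) (by omega)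
      nlinarith [hi'.1.2, hi.1.1]
  have hsumH : (∑ k ∈ S, Hc k) ≤ hamIcc x x₀ (-(n:ℤ)) n := by
    have h1 : ∑ k ∈ S, (E k).card = (S.biUnion E).card := (Finset.card_biUnion hdisj).symm
    have h2 : S.biUnion E ⊆ @Finset.filter ℤ (fun i => x i ≠ x₀ i) (Classical.decPred _)
        (Finset.Icc (-(n:ℤ)) n) := by
      intro i hi
      rw [Finset.mem_biUnion] at hi
      obtain ⟨k, hkS, hik⟩ := hi
      rw [hE] at hik
      simp only [Finset.mem_filter] at hik ⊢
      exact ⟨hblockmono k hkS hik.1, hik.2⟩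
    calc ∑ k ∈ S, Hc k = (S.biUnion E).card := by
          simp only [hHcE]; exact h1
      _ ≤ _ := Finset.card_le_card h2
  -- D is controlled by the jump count
  have hDle : D.card ≤ hamIcc x₀ (fun i => x₀ (i + p)) (-(n:ℤ)) n := by
    have hex : ∀ k : ℤ, ∃ j : ℤ, (0 ≤ j ∧ j < p) ∧
        ((blk k ≠ blk (k+1)) → x₀ (k*p+j) ≠ x₀ ((k*p+j)+p)) := by
      intro k
      by_cases h : blk k ≠ blk (k+1)
      · obtain ⟨j, hj⟩ := Function.ne_iff.mp h
        refine ⟨(j:ℤ), ⟨Int.ofNat_nonneg _, by exact_mod_cast j.isLt⟩, fun _ hcon => ?_⟩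
        exact hj (hcon.trans (congrArg x₀ (by ring)))
      · exact ⟨0, ⟨le_refl 0, hpz⟩, fun hc => absurd hc h⟩
    choose jf hjfb hjfe using hex
    unfold hamIcc
    apply Finset.card_le_card_of_injOn (fun k => k * p + jf k)
    · intro k hk
      rw [hD] at hk
      simp only [Finset.mem_coe, Finset.mem_filter, Finset.mem_Icc] at hk ⊢
      obtain ⟨⟨hk1, hk2⟩, hkne⟩ := hk
      obtain ⟨hj1, hj2⟩ := hjfb k
      constructor
      · constructor
        · have h5 : (-(N:ℤ)) * p ≤ k * p := mul_le_mul_of_nonneg_right hk1 (by omega)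
          rw [hnz]; nlinarith
        · have h5 : k * p ≤ ((N:ℤ)-1) * p := mul_le_mul_of_nonneg_right hk2 (by omega)
          rw [hnz]; nlinarith
      · exact hjfe k hkne
    · intro k1 h1 k2 h2 heq
      simp only at heq
      obtain ⟨hb1, hb2⟩ := hjfb k1
      obtain ⟨hb3, hb4⟩ := hjfb k2
      rcases lt_trichotomy k1 k2 with h | h | h
      · exfalso
        have h5 : (k1+1) * p ≤ k2 * p := mul_le_mul_of_nonneg_right (by omega) (by omega)
        nlinarith
      · exact h
      · exfalso
        have h5 : (k2+1) * p ≤ k1 * p := mul_le_mul_of_nonneg_right (by omega) (by omega)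
        nlinarith
  -- S \ G is covered by g-neighborhoods of D
  have hSGsub : S \ G ⊆ D.biUnion (fun dd => (Finset.range g).image (fun t : ℕ => dd - t)) := by
    intro k hk
    rw [Finset.mem_sdiff] at hk
    obtain ⟨hkS, hkG⟩ := hk
    have hknot : ¬ (∀ t : ℕ, t < g → blk (k + t) = blk k) := by
      intro hgood; exact hkG (Finset.mem_filter.mpr ⟨hkS, hgood⟩)
    push_neg at hknot
    obtain ⟨t, htg, htne⟩ := hknot
    have hex : ∃ t, t < g ∧ blk (k + t) ≠ blk k := ⟨t, htg, htne⟩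
    have hspec := Nat.find_spec hex
    set t₀ := Nat.find hex with ht₀
    obtain ⟨ht₀g, ht₀ne⟩ := hspec
    have ht₀pos : 0 < t₀ := by
      rcases Nat.eq_zero_or_pos t₀ with h | h
      · exfalso
        apply ht₀ne
        rw [h]
        norm_num
      · exact h
    have hprev : blk (k + ((t₀ - 1 : ℕ) : ℤ)) = blk k := by
      by_contra hne
      exact Nat.find_min hex (by omega) ⟨by omega, hne⟩
    rw [hS, Finset.mem_Icc] at hkS
    refine Finset.mem_biUnion.mpr ⟨k + (t₀:ℤ) - 1, ?_, ?_⟩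
    · rw [hD, Finset.mem_filter]
      constructor
      · rw [Finset.mem_Icc]
        have : (1:ℤ) ≤ (t₀:ℤ) := by exact_mod_cast ht₀pos
        have : (t₀:ℤ) ≤ g := by exact_mod_cast ht₀g.le
        omega
      · have e1 : k + (t₀:ℤ) - 1 = k + ((t₀ - 1 : ℕ) : ℤ) := by
          push_cast [Nat.cast_sub ht₀pos]
          ring
        have e2 : k + (t₀:ℤ) - 1 + 1 = k + (t₀:ℤ) := by ring
        rw [e2, e1, hprev]
        exact fun hh => ht₀ne hh.symm
    · refine Finset.mem_image.mpr ⟨t₀ - 1, Finset.mem_range.mpr (by omega), ?_⟩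
      push_cast [Nat.cast_sub ht₀pos]
      ring
  have hSG : (S \ G).card ≤ D.card * g := by
    calc (S \ G).card ≤ (D.biUnion (fun dd => (Finset.range g).image (fun t : ℕ => dd - t))).card :=
          Finset.card_le_card hSGsub
      _ ≤ ∑ dd ∈ D, ((Finset.range g).image (fun t : ℕ => dd - (t:ℤ))).card :=
          Finset.card_biUnion_le
      _ ≤ ∑ _dd ∈ D, g := Finset.sum_le_sum (fun dd _ =>
          le_trans Finset.card_image_le (le_of_eq (Finset.card_range g)))
      _ = D.card * g := by rw [Finset.sum_const, smul_eq_mul]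
  have hScard : S.card = 2*N+1-g := by
    rw [hS, Int.card_Icc]
    omega
  have hGsubS : G ⊆ S := by rw [hG]; exact Finset.filter_subset _ _
  have hGcard : S.card ≤ G.card + D.card * g := by
    have := Finset.card_sdiff_add_card_eq_card hGsubS
    omega
  -- real arithmetic
  have hDr : (D.card : ℝ) ≤ (hamIcc x₀ (fun i => x₀ (i + p)) (-(n:ℤ)) n : ℝ) := by
    exact_mod_cast hDle
  have hDr2 : (D.card : ℝ) < (εc / (8 * g * p)) * (2*(n:ℝ)+1) := lt_of_le_of_lt hDr hJn
  have h2n3 : 2*(n:ℝ)+1 ≤ (2*(N:ℝ)+3)*p := by rw [hnr]; nlinarith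
  have hN3pos : (0:ℝ) < 2*(N:ℝ)+3 := by positivity
  have hDg : (D.card : ℝ) * g ≤ εc * (2*(N:ℝ)+3)/8 := by
    have h1 : (D.card:ℝ) * g < (εc / (8 * g * p)) * (2*(n:ℝ)+1) * g := by
      apply mul_lt_mul_of_pos_right hDr2 hgr
    have h2 : (εc / (8 * g * p)) * (2*(n:ℝ)+1) * g ≤ (εc / (8 * g * p)) * ((2*(N:ℝ)+3)*p) * g := by
      have hc : (0:ℝ) ≤ εc / (8*g*p) := by positivity
      exact mul_le_mul_of_nonneg_right (mul_le_mul_of_nonneg_left h2n3 hc) hgr.le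
    have h3 : (εc / (8 * g * p)) * ((2*(N:ℝ)+3)*p) * g = εc * (2*(N:ℝ)+3)/8 := by
      field_simp
    linarith
  have hg2 : (g:ℝ) + 2 ≤ εc * (2*(N:ℝ)+3)/8 := by
    have h1 : 8 * ((g:ℝ)+2) ≤ εc * N := by
      rw [div_le_iff₀ hε0] at hNceil
      linarith [hNceil]
    nlinarith
  have hGr : (2*(N:ℝ)+3)*(1 - εc/4) ≤ (G.card : ℝ) := by
    have h1 : ((2*N+1-g : ℕ) : ℝ) ≤ (G.card : ℝ) + (D.card : ℝ) * g := by
      rw [← hScard]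
      push_cast
      exact_mod_cast hGcard
    have h2 : ((2*N+1-g : ℕ) : ℝ) = 2*(N:ℝ)+1-g := by
      have : g ≤ 2*N+1 := by omega
      push_cast [Nat.cast_sub this]
      push_cast
      ring
    rw [h2] at h1
    nlinarith
  have hGpos : (0:ℝ) < (G.card : ℝ) := by nlinarith
  have hGne : G.Nonempty := by
    rw [← Finset.card_pos]
    exact_mod_cast hGpos
  obtain ⟨kmin, hkminG, hkminmin⟩ := Finset.exists_min_image G Hc hGne
  have hsummin : G.card * Hc kmin ≤ ∑ k ∈ G, Hc k := by
    calc G.card * Hc kmin = G.card • Hc kmin := by rw [smul_eq_mul]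
      _ ≤ ∑ k ∈ G, Hc k := Finset.card_nsmul_le_sum G Hc _ (fun k hk => hkminmin k hk)
  have hsumG : ∑ k ∈ G, Hc k ≤ ∑ k ∈ S, Hc k :=
    Finset.sum_le_sum_of_subset hGsubS
  have hCr : (G.card : ℝ) * (Hc kmin : ℝ) < (m + εc/2) * (2*(n:ℝ)+1) := by
    have h1 : (G.card : ℝ) * (Hc kmin : ℝ) ≤ ((∑ k ∈ S, Hc k : ℕ) : ℝ) := by
      exact_mod_cast le_trans hsummin hsumG
    have h2 : ((∑ k ∈ S, Hc k : ℕ) : ℝ) ≤ (hamIcc x x₀ (-(n:ℤ)) n : ℝ) := by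
      exact_mod_cast hsumH
    linarith
  -- final arithmetic
  have hfinal : (Hc kmin : ℝ) ≤ p * (m + εc) := by
    apply core_arith hm0 hm1 hε0 hε1 hpr hGr hGpos (by positivity)
    calc (G.card:ℝ) * (Hc kmin:ℝ) < (m + εc/2) * (2*(n:ℝ)+1) := hCr
      _ ≤ (m + εc/2)*((2*(N:ℝ)+3)*p) := mul_le_mul_of_nonneg_left h2n3 (by linarith)
  -- conclude
  refine ⟨kmin, ?_, ?_⟩
  · rw [hG, Finset.mem_filter] at hkminG
    intro t ht j
    have := congrFun (hkminG.2 t ht) j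
    rw [hblk] at this
    simpa using this
  · have hHhw : Hc kmin = hw x (fun j : Fin p => x₀ (kmin * p + j)) := by
      rw [hHc]
      exact Hhw hp hxper kmin
    rw [← hHhw]
    exact hfinal

end corelemma2

/-- if `X` has the unique approximation property, then every
`p`-periodic point has a `p`-periodic best approximation in `X`. -/
theorem unique_approx_periodic {A : Type*} [Fintype A]
    (d : (ℤ → A) → (ℤ → A) → ℝ) (hd : d = dB (A := A) ∨ d = dW (A := A))
    (X : Set (ℤ → A)) (hX : IsSubshift X) (huap : UniqueApprox d X)
    (p : ℕ) (hp : 0 < p) (x : ℤ → A) (hxper : ∀ i, x (i + p) = x i) :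
    ∃ y ∈ X, (∀ i, y (i + p) = y i) ∧ d x y = sInf (d x '' X) := by
  classical
  obtain ⟨x₀, hx₀X, hset⟩ := huap x
  set m : ℝ := sInf (d x '' X) with hm
  have hpr : (0:ℝ) < (p:ℝ) := by exact_mod_cast hp
  have hbdd : BddBelow (d x '' X) := by
    refine ⟨0, ?_⟩
    rintro r ⟨z, hz, rfl⟩
    exact d_nonneg d hd x z
  have hmem : ∀ z ∈ X, m ≤ d x z := fun z hz => csInf_le hbdd ⟨z, hz, rfl⟩
  have hx₀R : x₀ ∈ {z | z ∈ X ∧ d x₀ z = 0} := ⟨hx₀X, d_self d hd x₀⟩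
  rw [← hset] at hx₀R
  have hx₀min : d x x₀ = m := hx₀R.2
  set x₁ : ℤ → A := fun i => x₀ (i + p) with hx₁
  have hx₁X : x₁ ∈ X := shift_mem hX hx₀X p
  have hd₁ : d x x₁ = m := by
    refine le_antisymm ?_ (hmem x₁ hx₁X)
    rw [← hx₀min]
    exact d_shift_le x x₀ p d hd hxper
  have hx₁L : x₁ ∈ {z | z ∈ X ∧ d x z = m} := ⟨hx₁X, hd₁⟩
  rw [hset] at hx₁L
  have hx₁R : d x₀ x₁ = 0 := hx₁L.2
  have hm0 : 0 ≤ m := hx₀min ▸ d_nonneg d hd x x₀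
  have hm1 : m ≤ 1 := hx₀min ▸ d_le_one d hd x x₀
  have hA : ∀ ε : ℝ, 0 < ε → ∀ᶠ n : ℕ in atTop,
      (hamIcc x x₀ (-(n:ℤ)) n : ℝ)/(2*n+1) < m + ε :=
    fun ε hε => d_eventually d hd x x₀ (le_of_eq hx₀min) hε
  have hJ : ∀ ε : ℝ, 0 < ε → ∀ᶠ n : ℕ in atTop,
      (hamIcc x₀ (fun i => x₀ (i + p)) (-(n:ℤ)) n : ℝ)/(2*n+1) < ε := by
    intro ε hε
    have := d_eventually d hd x₀ x₁ (le_of_eq hx₁R) hε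
    exact this.mono fun n hn => by rw [zero_add] at hn; exact hn
  have hcore : ∀ nn : ℕ, ∃ k : ℤ,
      (∀ t : ℕ, t < nn+1 → ∀ j : Fin p, x₀ ((k + t) * p + j) = x₀ (k * p + j))
      ∧ ((hw x (fun j : Fin p => x₀ (k * p + j)) : ℝ)) ≤ p * (m + 1/(((nn+1:ℕ)):ℝ)) := by
    intro nn
    have hε0 : (0:ℝ) < 1/(((nn+1:ℕ)):ℝ) := by positivity
    have hε1 : (1:ℝ)/(((nn+1:ℕ)):ℝ) ≤ 1 := by
      rw [div_le_one (by positivity)]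
      exact_mod_cast Nat.one_le_iff_ne_zero.mpr (Nat.succ_ne_zero nn)
    exact core hp hxper hm0 hm1 hε0 hε1 (Nat.succ_pos nn)
      (hA (1/(((nn+1:ℕ)):ℝ)/2) (by positivity))
      (hJ (1/(((nn+1:ℕ)):ℝ)/(8 * ((nn+1:ℕ):ℝ) * (p:ℝ))) (by positivity))
  choose kf hrun hhw using hcore
  have : ∃ w : Fin p → A, {nn : ℕ | (fun j : Fin p => x₀ (kf nn * p + j)) = w}.Infinite := by
    have hfin : Finite (Fin p → A) := by infer_instance
    obtain ⟨w, hwinf⟩ := Finite.exists_infinite_fiber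
      (fun nn : ℕ => (fun j : Fin p => x₀ (kf nn * p + j)))
    exact ⟨w, Set.infinite_coe_iff.mp hwinf⟩
  obtain ⟨w, hwinf⟩ := this
  have hwfreq : ∀ nn : ℕ, ∃ nn' , nn ≤ nn' ∧ (fun j : Fin p => x₀ (kf nn' * p + j)) = w := by
    intro nn
    by_contra hcon
    push_neg at hcon
    apply hwinf
    apply Set.Finite.subset (Set.finite_Iio nn)
    intro k hk
    rw [Set.mem_setOf_eq] at hk
    rw [Set.mem_Iio]
    by_contra hk2
    push_neg at hk2
    exact hcon k hk2 hk
  have hrunAll : ∀ g : ℕ, ∃ k : ℤ, ∀ t : ℕ, t < g → ∀ j : Fin p, x₀ ((k + t) * p + j) = w j := by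
    intro g
    obtain ⟨nn', hge, hWe⟩ := hwfreq g
    refine ⟨kf nn', fun t ht j => ?_⟩
    rw [hrun nn' t (by omega) j]
    exact congrFun hWe j
  have hwle : (hw x w : ℝ) ≤ p * m := by
    refine le_of_forall_pos_le_add fun δ hδ => ?_
    obtain ⟨nn, hnn⟩ := exists_nat_gt ((p:ℝ)/δ)
    obtain ⟨nn', hge, hWe⟩ := hwfreq nn
    have h1 := hhw nn'
    rw [hWe] at h1
    have hq : (p:ℝ) * (1/(((nn'+1:ℕ)):ℝ)) < δ := by
      have hnn' : (p:ℝ)/δ < ((nn'+1:ℕ):ℝ) := by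
        refine lt_of_lt_of_le hnn ?_
        have h7 : nn ≤ nn' + 1 := by omega
        exact_mod_cast h7
      rw [div_lt_iff₀ hδ] at hnn'
      have hpos9 : (0:ℝ) < ((nn'+1:ℕ):ℝ) := by positivity
      rw [mul_one_div, div_lt_iff₀ hpos9]
      calc (p:ℝ) < ((nn'+1:ℕ):ℝ) * δ := hnn'
        _ = δ * ((nn'+1:ℕ):ℝ) := mul_comm _ _
    have hexp : (p:ℝ) * (m + 1/(((nn'+1:ℕ)):ℝ)) = p*m + p*(1/(((nn'+1:ℕ)):ℝ)) := by ring
    rw [hexp] at h1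
    linarith
  refine ⟨perPt hp w, perPt_mem hX hx₀X hp w hrunAll, fun i => perPt_per hp w i, ?_⟩
  refine le_antisymm ?_ (hmem _ (perPt_mem hX hx₀X hp w hrunAll))
  refine le_trans (d_per_upper d hd hp hxper w) ?_
  rw [div_le_iff₀ hpr]
  linarith [hwle, mul_comm m (p:ℝ)]
end

section
/- There exists a nontrivial (nonzero, nonatomic) shift-invariant Borel measure on the quotient of Σ^ℤ by the relation d_B = 0, equipped with the Besicovitch metric topology. Concretely, pushing forward Lebesgue measure on [0,1] along the isometric embedding U' : [0,1] → {0,1}^ℤ (density coding) yields such a measure, supported on a zero-entropy subshift's projection, since each point in the image is shift-invariant modulo d_B = 0. -/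
open Filter

section BesiAux

open Filter

/-- The sequence whose `limsup` is `dB`. -/
noncomputable def dseq {A : Type*} (x y : ℤ → A) (n : ℕ) : ℝ :=
  (hamIcc x y (-(n : ℤ)) n : ℝ) / (2 * n + 1)

lemma dB_eq_limsup {A : Type*} (x y : ℤ → A) : dB x y = atTop.limsup (dseq x y) := rfl

lemma denom_pos (n : ℕ) : (0 : ℝ) < 2 * n + 1 := by positivity

lemma hamIcc_eq {A : Type*} (x y : ℤ → A) (a b : ℤ) [DecidablePred fun i => x i ≠ y i] :
    hamIcc x y a b = ((Finset.Icc a b).filter fun i => x i ≠ y i).card := by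
  simp only [hamIcc]
  congr

lemma hamIcc_card_le {A : Type*} (x y : ℤ → A) (n : ℕ) :
    (hamIcc x y (-(n : ℤ)) n : ℝ) ≤ 2 * n + 1 := by
  classical
  have h : hamIcc x y (-(n : ℤ)) n ≤ (Finset.Icc (-(n : ℤ)) n).card := by
    rw [hamIcc_eq]; exact Finset.card_filter_le _ _
  rw [Int.card_Icc] at h
  have h2 : ((n : ℤ) + 1 - -(n : ℤ)).toNat = 2 * n + 1 := by omega
  rw [h2] at h
  exact_mod_cast h

lemma dseq_nonneg {A : Type*} (x y : ℤ → A) (n : ℕ) : 0 ≤ dseq x y n := by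
  unfold dseq; positivity

lemma dseq_le_one {A : Type*} (x y : ℤ → A) (n : ℕ) : dseq x y n ≤ 1 := by
  unfold dseq
  rw [div_le_one (denom_pos n)]
  exact hamIcc_card_le x y n

lemma dseq_bddAbove {A : Type*} (x y : ℤ → A) :
    IsBoundedUnder (· ≤ ·) atTop (dseq x y) :=
  isBoundedUnder_of ⟨1, fun n => dseq_le_one x y n⟩

lemma dseq_bddBelow {A : Type*} (x y : ℤ → A) :
    IsBoundedUnder (· ≥ ·) atTop (dseq x y) :=
  isBoundedUnder_of ⟨0, fun n => dseq_nonneg x y n⟩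

lemma dseq_cobdd {A : Type*} (x y : ℤ → A) :
    IsCoboundedUnder (· ≤ ·) atTop (dseq x y) :=
  (dseq_bddBelow x y).isCoboundedUnder_le

lemma dB_nonneg {A : Type*} (x y : ℤ → A) : 0 ≤ dB x y := by
  rw [dB_eq_limsup]
  exact le_limsup_of_frequently_le (Frequently.of_forall (dseq_nonneg x y)) (dseq_bddAbove x y)

lemma hamIcc_comm {A : Type*} (x y : ℤ → A) (a b : ℤ) : hamIcc x y a b = hamIcc y x a b := by
  classical
  rw [hamIcc_eq, hamIcc_eq]
  congr 1
  apply Finset.filter_congr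
  intro i _
  simp [ne_comm]

lemma dB_symm {A : Type*} (x y : ℤ → A) : dB x y = dB y x := by
  rw [dB_eq_limsup, dB_eq_limsup]
  congr 1
  funext n
  unfold dseq
  rw [hamIcc_comm]

lemma hamIcc_triangle {A : Type*} (x y z : ℤ → A) (a b : ℤ) :
    hamIcc x z a b ≤ hamIcc x y a b + hamIcc y z a b := by
  classical
  rw [hamIcc_eq x z, hamIcc_eq x y, hamIcc_eq y z]
  refine le_trans ?_ (Finset.card_union_le _ _)
  apply Finset.card_le_card
  intro i hi
  simp only [Finset.mem_filter, Finset.mem_union] at *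
  obtain ⟨hmem, hne⟩ := hi
  by_cases h : x i = y i
  · exact Or.inr ⟨hmem, fun hyz => hne (h.trans hyz)⟩
  · exact Or.inl ⟨hmem, h⟩

lemma dB_triangle {A : Type*} (x y z : ℤ → A) : dB x z ≤ dB x y + dB y z := by
  rw [dB_eq_limsup, dB_eq_limsup, dB_eq_limsup]
  have hpt : ∀ n, dseq x z n ≤ dseq x y n + dseq y z n := by
    intro n
    unfold dseq
    rw [← add_div]
    gcongr
    have h := hamIcc_triangle x y z (-(n : ℤ)) n
    exact_mod_cast h
  calc atTop.limsup (dseq x z)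
      ≤ atTop.limsup (fun n => dseq x y n + dseq y z n) :=
        limsup_le_limsup (Eventually.of_forall hpt) (dseq_cobdd x z)
          (isBoundedUnder_le_add (dseq_bddAbove x y) (dseq_bddAbove y z))
    _ ≤ atTop.limsup (dseq x y) + atTop.limsup (dseq y z) :=
        limsup_add_le (dseq_bddBelow x y) (dseq_bddAbove x y)
          (dseq_cobdd y z) (dseq_bddAbove y z)

lemma dB_congr_of_zero {A : Type*} {a b : ℤ → A} (hab : dB a b = 0) (z : ℤ → A) :
    dB z a = dB z b := by
  apply le_antisymm
  · calc dB z a ≤ dB z b + dB b a := dB_triangle z b a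
      _ = dB z b := by rw [dB_symm b a, hab, add_zero]
  · calc dB z b ≤ dB z a + dB a b := dB_triangle z a b
      _ = dB z a := by rw [hab, add_zero]

/-- limsup of a nonnegative sequence dominated by `v + e` with `e → 0`. -/
lemma limsup_le_of_le_add_err {u v e : ℕ → ℝ} (hu0 : ∀ n, 0 ≤ u n)
    (hvb : IsBoundedUnder (· ≤ ·) atTop v) (hvb2 : IsBoundedUnder (· ≥ ·) atTop v)
    (he : Tendsto e atTop (nhds 0)) (h : ∀ n, u n ≤ v n + e n) :
    atTop.limsup u ≤ atTop.limsup v := by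
  have heb : IsBoundedUnder (· ≤ ·) atTop e := he.isBoundedUnder_le
  have heb2 : IsBoundedUnder (· ≥ ·) atTop e := he.isBoundedUnder_ge
  have h1 : atTop.limsup u ≤ atTop.limsup (fun n => v n + e n) :=
    limsup_le_limsup (Eventually.of_forall h)
      ((isBoundedUnder_of ⟨0, hu0⟩ : IsBoundedUnder (· ≥ ·) atTop u).isCoboundedUnder_le)
      (isBoundedUnder_le_add hvb heb)
  have h2 : atTop.limsup (fun n => v n + e n) ≤ atTop.limsup v + atTop.limsup e :=
    limsup_add_le hvb2 hvb heb2.isCoboundedUnder_le heb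
  have h3 : atTop.limsup e = 0 := he.limsup_eq
  linarith

lemma limsup_le_of_le_tendsto {u w : ℕ → ℝ} {c : ℝ} (hu0 : ∀ n, 0 ≤ u n)
    (hw : Tendsto w atTop (nhds c)) (h : ∀ n, u n ≤ w n) : atTop.limsup u ≤ c := by
  rw [← hw.limsup_eq]
  exact limsup_le_limsup (Eventually.of_forall h)
    ((isBoundedUnder_of ⟨0, hu0⟩ : IsBoundedUnder (· ≥ ·) atTop u).isCoboundedUnder_le)
    hw.isBoundedUnder_le

end BesiAux
section BesiComb
open Filter

lemma Uprime_def (x : ℝ) (i : ℕ) :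
    Uprime x i = decide (⌊x * 2 ^ Nat.log 2 (i + 1)⌋ ≤ ((i : ℤ) + 1 - 2 ^ Nat.log 2 (i + 1))) :=
  rfl

lemma Tprime_natCast (x : ℝ) (j : ℕ) : Tprime x (j : ℤ) = Uprime x j := by
  simp [Tprime]

lemma Tprime_of_nonneg (x : ℝ) {i : ℤ} (hi : 0 ≤ i) : Tprime x i = Uprime x i.toNat := by
  simp [Tprime, hi]

lemma Tprime_of_neg (x : ℝ) {i : ℤ} (hi : i < 0) : Tprime x i = Uprime x (-i - 1).toNat := by
  simp [Tprime, not_le.mpr hi]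

/-- If `i+1` and `i+2` lie in the same dyadic block and `U'(x)` changes between `i` and
`i+1`, then `i` is determined by the block. -/
lemma change_within {x : ℝ} {i : ℕ} (hk : Nat.log 2 (i + 2) = Nat.log 2 (i + 1))
    (hne : Uprime x (i + 1) ≠ Uprime x i) :
    (i : ℤ) = ⌊x * 2 ^ Nat.log 2 (i + 1)⌋ + 2 ^ Nat.log 2 (i + 1) - 2 := by
  have h1 : Uprime x i
      = decide (⌊x * 2 ^ Nat.log 2 (i + 1)⌋ ≤ ((i : ℤ) + 1 - 2 ^ Nat.log 2 (i + 1))) := rfl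
  have h2 : Uprime x (i + 1)
      = decide (⌊x * 2 ^ Nat.log 2 (i + 1)⌋ ≤ ((i : ℤ) + 2 - 2 ^ Nat.log 2 (i + 1))) := by
    rw [Uprime_def]
    have e2 : i + 1 + 1 = i + 2 := rfl
    rw [e2, hk]
    have e1 : (((i + 1 : ℕ) : ℤ) + 1 - 2 ^ Nat.log 2 (i + 1))
        = ((i : ℤ) + 2 - 2 ^ Nat.log 2 (i + 1)) := by push_cast; ring
    simp only [e1]
  by_cases hc : ⌊x * 2 ^ Nat.log 2 (i + 1)⌋ ≤ (i : ℤ) + 1 - 2 ^ Nat.log 2 (i + 1)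
  · have hc2 : ⌊x * 2 ^ Nat.log 2 (i + 1)⌋ ≤ (i : ℤ) + 2 - 2 ^ Nat.log 2 (i + 1) :=
      le_trans hc (by omega)
    rw [h2, h1] at hne
    simp [hc, hc2] at hne
  · by_cases hc2 : ⌊x * 2 ^ Nat.log 2 (i + 1)⌋ ≤ (i : ℤ) + 2 - 2 ^ Nat.log 2 (i + 1)
    · omega
    · rw [h2, h1] at hne
      simp [hc, hc2] at hne

lemma log_ne_succ {i : ℕ} (h : Nat.log 2 (i + 2) ≠ Nat.log 2 (i + 1)) :
    i + 2 = 2 ^ Nat.log 2 (i + 2) := by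
  have h1 : 2 ^ Nat.log 2 (i + 2) ≤ i + 2 := Nat.pow_log_le_self 2 (by omega)
  by_contra hne
  have h2 : 2 ^ Nat.log 2 (i + 2) ≤ i + 1 := by omega
  have h3 : Nat.log 2 (i + 2) ≤ Nat.log 2 (i + 1) :=
    (Nat.le_log_iff_pow_le (by norm_num) (by omega)).mpr h2
  have h4 : Nat.log 2 (i + 1) ≤ Nat.log 2 (i + 2) := Nat.log_mono_right (by omega)
  omega

/-- The number of change positions of `U'(x)` in `[0,N]` is at most `2 (log₂(N+2)+1)`. -/
lemma changes_card_le (x : ℝ) (N : ℕ) :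
    (((Finset.range (N + 1)).filter fun i => Uprime x (i + 1) ≠ Uprime x i).card)
      ≤ 2 * (Nat.log 2 (N + 2) + 1) := by
  classical
  have h := Finset.card_le_card_of_injOn
    (fun i => ((Nat.log 2 (i + 2), decide (Nat.log 2 (i + 2) = Nat.log 2 (i + 1))) : ℕ × Bool))
    (s := (Finset.range (N + 1)).filter fun i => Uprime x (i + 1) ≠ Uprime x i)
    (t := (Finset.range (Nat.log 2 (N + 2) + 1)) ×ˢ (Finset.univ : Finset Bool)) ?_ ?_
  · simpa [Finset.card_product, mul_comm] using h
  · intro i hi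
    rw [Finset.mem_coe, Finset.mem_filter, Finset.mem_range] at hi
    rw [Finset.mem_coe, Finset.mem_product, Finset.mem_range]
    exact ⟨Nat.lt_succ_of_le (Nat.log_mono_right (b := 2) (show i + 2 ≤ N + 2 by omega)), Finset.mem_univ _⟩
  · intro i hi j hj hij
    rw [Finset.mem_coe, Finset.mem_filter, Finset.mem_range] at hi hj
    obtain ⟨hiN, hichg⟩ := hi
    obtain ⟨hjN, hjchg⟩ := hj
    have h1 : Nat.log 2 (i + 2) = Nat.log 2 (j + 2) := congrArg Prod.fst hij
    have h2 : (Nat.log 2 (i + 2) = Nat.log 2 (i + 1))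
        ↔ (Nat.log 2 (j + 2) = Nat.log 2 (j + 1)) := by
      have := congrArg Prod.snd hij
      simpa [decide_eq_decide] using this
    by_cases hcase : Nat.log 2 (i + 2) = Nat.log 2 (i + 1)
    · have hcase' : Nat.log 2 (j + 2) = Nat.log 2 (j + 1) := h2.mp hcase
      have e1 := change_within hcase hichg
      have e2 := change_within hcase' hjchg
      have hk : Nat.log 2 (i + 1) = Nat.log 2 (j + 1) := by omega
      rw [hk] at e1
      omega
    · have hcase' : ¬ Nat.log 2 (j + 2) = Nat.log 2 (j + 1) := fun hh => hcase (h2.mpr hh)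
      have e1 := log_ne_succ hcase
      have e2 := log_ne_succ hcase'
      rw [h1] at e1
      omega

/-- The Hamming distance between `σT'(x)` and `T'(x)` on `[-n,n]` is `O(log n)`. -/
lemma ham_shift_le (x : ℝ) (n : ℕ) :
    hamIcc (shiftMap (Tprime x)) (Tprime x) (-(n : ℤ)) n ≤ 4 * (Nat.log 2 (n + 2) + 1) := by
  classical
  have hsub : (Finset.Icc (-(n : ℤ)) n).filter (fun i => shiftMap (Tprime x) i ≠ Tprime x i)
      ⊆ ((Finset.range (n + 1)).filter (fun j => Uprime x (j + 1) ≠ Uprime x j)).image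
          (fun j : ℕ => (j : ℤ))
        ∪ ((Finset.range (n + 1)).filter (fun j => Uprime x (j + 1) ≠ Uprime x j)).image
          (fun j : ℕ => -(j : ℤ) - 2) := by
    intro i hi
    rw [Finset.mem_filter, Finset.mem_Icc] at hi
    obtain ⟨⟨hl, hr⟩, hne⟩ := hi
    have hshift : shiftMap (Tprime x) i = Tprime x (i + 1) := rfl
    rw [Finset.mem_union, Finset.mem_image, Finset.mem_image]
    rcases le_or_gt 0 i with hpos | hneg
    · left
      lift i to ℕ using hpos with j
      refine ⟨j, ?_, rfl⟩
      rw [Finset.mem_filter, Finset.mem_range]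
      refine ⟨by omega, ?_⟩
      have e1 : Tprime x ((j : ℤ) + 1) = Uprime x (j + 1) := by
        rw [show ((j : ℤ) + 1) = ((j + 1 : ℕ) : ℤ) by push_cast; ring, Tprime_natCast]
      rw [hshift, e1, Tprime_natCast] at hne
      exact hne
    · rcases eq_or_lt_of_le (show i ≤ -1 by omega) with heq | hlt2
      · exfalso
        apply hne
        rw [hshift, heq]
        norm_num
        rw [show (0 : ℤ) = ((0 : ℕ) : ℤ) by norm_num, Tprime_natCast,
          Tprime_of_neg x (show (-1 : ℤ) < 0 by norm_num)]
        norm_num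
      · right
        have hi2 : i ≤ -2 := by omega
        refine ⟨(-i - 2).toNat, ?_, by omega⟩
        rw [Finset.mem_filter, Finset.mem_range]
        refine ⟨by omega, ?_⟩
        have hTi : Tprime x i = Uprime x ((-i - 2).toNat + 1) := by
          rw [Tprime_of_neg x (show i < 0 by omega)]
          congr 1
          omega
        have hTi1 : Tprime x (i + 1) = Uprime x ((-i - 2).toNat) := by
          rw [Tprime_of_neg x (show i + 1 < 0 by omega)]
          congr 1
          omega
        rw [hshift, hTi1, hTi] at hne
        exact hne.symm
  have hham : hamIcc (shiftMap (Tprime x)) (Tprime x) (-(n : ℤ)) n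
      ≤ (((Finset.range (n + 1)).filter (fun j => Uprime x (j + 1) ≠ Uprime x j)).image
          (fun j : ℕ => (j : ℤ))
        ∪ ((Finset.range (n + 1)).filter (fun j => Uprime x (j + 1) ≠ Uprime x j)).image
          (fun j : ℕ => -(j : ℤ) - 2)).card := by
    rw [hamIcc_eq]
    exact Finset.card_le_card hsub
  have h2 := Finset.card_union_le
    (((Finset.range (n + 1)).filter (fun j => Uprime x (j + 1) ≠ Uprime x j)).image
      (fun j : ℕ => (j : ℤ)))
    (((Finset.range (n + 1)).filter (fun j => Uprime x (j + 1) ≠ Uprime x j)).image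
      (fun j : ℕ => -(j : ℤ) - 2))
  have h3 := Finset.card_image_le
    (s := (Finset.range (n + 1)).filter (fun j => Uprime x (j + 1) ≠ Uprime x j))
    (f := fun j => (j : ℤ))
  have h4 := Finset.card_image_le
    (s := (Finset.range (n + 1)).filter (fun j => Uprime x (j + 1) ≠ Uprime x j))
    (f := fun j => -(j : ℤ) - 2)
  have h5 := changes_card_le x n
  omega

end BesiComb
section BesiLimits
open Filter

lemma tendsto_inv_denom : Tendsto (fun n : ℕ => 1 / (2 * (n : ℝ) + 1)) atTop (nhds 0) := by
  have h1 : Tendsto (fun n : ℕ => 2 * (n : ℝ) + 1) atTop atTop :=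
    tendsto_atTop_add_const_right _ 1
      (Tendsto.const_mul_atTop two_pos tendsto_natCast_atTop_atTop)
  simpa [one_div, Pi.inv_def] using h1.inv_tendsto_atTop

lemma tendsto_log_div :
    Tendsto (fun n : ℕ => (Nat.log 2 (n + 2) : ℝ) / (2 * n + 1)) atTop (nhds 0) := by
  have hcomp : Tendsto (fun n : ℕ => (n : ℝ) + 2) atTop atTop :=
    tendsto_atTop_add_const_right _ 2 tendsto_natCast_atTop_atTop
  have h0 : Tendsto (fun n : ℕ => Real.log ((n : ℝ) + 2) / ((n : ℝ) + 2)) atTop (nhds 0) :=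
    (Real.isLittleO_log_id_atTop.tendsto_div_nhds_zero).comp hcomp
  have h0' : Tendsto (fun n : ℕ => (2 / Real.log 2) * (Real.log ((n : ℝ) + 2) / ((n : ℝ) + 2)))
      atTop (nhds 0) := by
    simpa using h0.const_mul (2 / Real.log 2)
  apply squeeze_zero (fun n => by positivity) _ h0'
  intro n
  have hlog2 : (0 : ℝ) < Real.log 2 := Real.log_pos (by norm_num)
  have hL : (Nat.log 2 (n + 2) : ℝ) * Real.log 2 ≤ Real.log ((n : ℝ) + 2) := by
    have hp : (2 : ℝ) ^ (Nat.log 2 (n + 2)) ≤ ((n : ℝ) + 2) := by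
      exact_mod_cast Nat.pow_log_le_self 2 (show n + 2 ≠ 0 by omega)
    calc (Nat.log 2 (n + 2) : ℝ) * Real.log 2 = Real.log (2 ^ Nat.log 2 (n + 2)) :=
          (Real.log_pow 2 (Nat.log 2 (n + 2))).symm
      _ ≤ Real.log ((n : ℝ) + 2) := Real.log_le_log (by positivity) hp
  have hrhs : (2 / Real.log 2) * (Real.log ((n : ℝ) + 2) / ((n : ℝ) + 2))
      = (2 * Real.log ((n : ℝ) + 2)) / (Real.log 2 * ((n : ℝ) + 2)) := by
    field_simp
  rw [hrhs, div_le_div_iff₀ (by positivity) (by positivity)]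
  have hlogpos : 0 ≤ Real.log ((n : ℝ) + 2) := Real.log_nonneg (by
    have : (0:ℝ) ≤ (n:ℝ) := Nat.cast_nonneg n
    linarith)
  have hnn : (0:ℝ) ≤ (n:ℝ) := Nat.cast_nonneg n
  nlinarith [mul_le_mul_of_nonneg_right hL (show (0:ℝ) ≤ (n : ℝ) + 2 by linarith)]

lemma tendsto_logterm (c : ℝ) :
    Tendsto (fun n : ℕ => c * ((Nat.log 2 (n + 2) : ℝ) + 1) / (2 * n + 1)) atTop (nhds 0) := by
  have heq : (fun n : ℕ => c * ((Nat.log 2 (n + 2) : ℝ) + 1) / (2 * n + 1))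
      = fun n : ℕ => c * ((Nat.log 2 (n + 2) : ℝ) / (2 * n + 1)) + c * (1 / (2 * n + 1)) := by
    funext n
    have hc : (2 * (n : ℝ) + 1) ≠ 0 := by positivity
    field_simp
  rw [heq]
  simpa using (tendsto_log_div.const_mul c).add (tendsto_inv_denom.const_mul c)

/-- `d_B(σT'(x), T'(x)) = 0`. -/
lemma dB_shift_Tprime (x : ℝ) : dB (shiftMap (Tprime x)) (Tprime x) = 0 := by
  refine le_antisymm ?_ (dB_nonneg _ _)
  rw [dB_eq_limsup]
  apply limsup_le_of_le_tendsto (dseq_nonneg _ _) (tendsto_logterm 4)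
  intro n
  unfold dseq
  gcongr
  have h := ham_shift_le x n
  exact_mod_cast h

/-- `d_B` is invariant under simultaneously shifting both arguments. -/
lemma dB_shift_shift {A : Type*} (x y : ℤ → A) : dB (shiftMap x) (shiftMap y) = dB x y := by
  classical
  have key : ∀ (u v : ℤ → A) (n : ℕ),
      hamIcc (shiftMap u) (shiftMap v) (-(n : ℤ)) n ≤ hamIcc u v (-(n : ℤ)) n + 1 := by
    intro u v n
    rw [hamIcc_eq, hamIcc_eq]
    have h := Finset.card_le_card_of_injOn (fun i : ℤ => i + 1)
      (s := (Finset.Icc (-(n : ℤ)) n).filter fun i => shiftMap u i ≠ shiftMap v i)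
      (t := ((Finset.Icc (-(n : ℤ)) n).filter fun i => u i ≠ v i) ∪ {((n : ℤ) + 1)}) ?_ ?_
    · refine le_trans h (le_trans (Finset.card_union_le _ _) ?_)
      simp
    · intro i hi
      rw [Finset.mem_coe, Finset.mem_filter, Finset.mem_Icc] at hi
      obtain ⟨⟨hl, hr⟩, hne⟩ := hi
      rw [Finset.mem_coe, Finset.mem_union, Finset.mem_filter, Finset.mem_Icc, Finset.mem_singleton]
      rcases eq_or_lt_of_le hr with heq | hlt
      · right; show i + 1 = (n : ℤ) + 1; omega
      · left
        exact ⟨⟨show -(n : ℤ) ≤ i + 1 by omega, show i + 1 ≤ (n : ℤ) by omega⟩, hne⟩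
    · intro i _ j _ hij
      simpa using hij
  have key2 : ∀ (u v : ℤ → A) (n : ℕ),
      hamIcc u v (-(n : ℤ)) n ≤ hamIcc (shiftMap u) (shiftMap v) (-(n : ℤ)) n + 1 := by
    intro u v n
    rw [hamIcc_eq, hamIcc_eq]
    have h := Finset.card_le_card_of_injOn (fun i : ℤ => i - 1)
      (s := (Finset.Icc (-(n : ℤ)) n).filter fun i => u i ≠ v i)
      (t := ((Finset.Icc (-(n : ℤ)) n).filter fun i => shiftMap u i ≠ shiftMap v i)
        ∪ {(-(n : ℤ) - 1)}) ?_ ?_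
    · refine le_trans h (le_trans (Finset.card_union_le _ _) ?_)
      simp
    · intro i hi
      rw [Finset.mem_coe, Finset.mem_filter, Finset.mem_Icc] at hi
      obtain ⟨⟨hl, hr⟩, hne⟩ := hi
      rw [Finset.mem_coe, Finset.mem_union, Finset.mem_filter, Finset.mem_Icc, Finset.mem_singleton]
      rcases eq_or_lt_of_le hl with heq | hlt
      · right; show i - 1 = -(n : ℤ) - 1; omega
      · left
        refine ⟨⟨show -(n : ℤ) ≤ i - 1 by omega, show i - 1 ≤ (n : ℤ) by omega⟩, ?_⟩
        show shiftMap u (i - 1) ≠ shiftMap v (i - 1)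
        have e1 : shiftMap u (i - 1) = u i := by
          show u (i - 1 + 1) = u i
          norm_num
        have e2 : shiftMap v (i - 1) = v i := by
          show v (i - 1 + 1) = v i
          norm_num
        rw [e1, e2]
        exact hne
    · intro i _ j _ hij
      simpa using hij
  have hpt1 : ∀ n, dseq (shiftMap x) (shiftMap y) n ≤ dseq x y n + 1 / (2 * n + 1) := by
    intro n
    unfold dseq
    rw [← add_div]
    gcongr
    exact_mod_cast key x y n
  have hpt2 : ∀ n, dseq x y n ≤ dseq (shiftMap x) (shiftMap y) n + 1 / (2 * n + 1) := by
    intro n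
    unfold dseq
    rw [← add_div]
    gcongr
    exact_mod_cast key2 x y n
  apply le_antisymm
  · rw [dB_eq_limsup, dB_eq_limsup]
    exact limsup_le_of_le_add_err (dseq_nonneg _ _) (dseq_bddAbove _ _) (dseq_bddBelow _ _)
      tendsto_inv_denom hpt1
  · rw [dB_eq_limsup, dB_eq_limsup]
    exact limsup_le_of_le_add_err (dseq_nonneg _ _) (dseq_bddAbove _ _) (dseq_bddBelow _ _)
      tendsto_inv_denom hpt2

end BesiLimits
section BesiSep
open Filter

lemma Uprime_eval {x : ℝ} {k q : ℕ} (h1 : 2 ^ k ≤ q + 1) (h2 : q + 1 < 2 ^ (k + 1)) :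
    Uprime x q = decide (⌊x * 2 ^ k⌋ ≤ ((q : ℤ) + 1 - 2 ^ k)) := by
  have hlog : Nat.log 2 (q + 1) = k := Nat.log_eq_of_pow_le_of_lt_pow h1 h2
  rw [Uprime_def, hlog]

/-- Separation: `d_B(T'(s), T'(t)) ≥ (s-t)/8` for `0 ≤ t ≤ s ≤ 1`. -/
lemma dB_Tprime_lower {t s : ℝ} (ht : 0 ≤ t) (hts : t ≤ s) (hs : s ≤ 1) :
    (s - t) / 8 ≤ dB (Tprime s) (Tprime t) := by
  classical
  rcases eq_or_lt_of_le hts with rfl | hlt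
  · simpa using dB_nonneg (Tprime t) (Tprime t)
  rw [dB_eq_limsup]
  refine le_limsup_of_frequently_le ?_ (dseq_bddAbove _ _)
  rw [frequently_atTop]
  intro N
  have hst : (0 : ℝ) < s - t := by linarith
  obtain ⟨M, hM⟩ := pow_unbounded_of_one_lt (2 / (s - t)) (one_lt_two : (1 : ℝ) < 2)
  set k := max (max M N) 1 with hkdef
  have hkM : M ≤ k := le_trans (le_max_left _ _) (le_max_left _ _)
  have hkN : N ≤ k := le_trans (le_max_right M N) (le_max_left _ _)
  have hk1 : 1 ≤ k := le_max_right _ _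
  have hklt : k + 1 < 2 ^ (k + 1) := Nat.lt_two_pow_self (n := k + 1)
  refine ⟨2 ^ (k + 1) - 2, by omega, ?_⟩
  -- notation
  have hpow2 : (2 : ℕ) ≤ 2 ^ (k + 1) := by
    calc (2:ℕ) = 2 ^ 1 := by norm_num
      _ ≤ 2 ^ (k + 1) := Nat.pow_le_pow_right (by norm_num) (by omega)
  have hn' : ((2 ^ (k + 1) - 2 : ℕ) : ℤ) = 2 ^ (k + 1) - 2 := by
    push_cast [Nat.cast_sub hpow2]
    norm_num
  have ha0 : (0 : ℤ) ≤ ⌊t * 2 ^ k⌋ := Int.floor_nonneg.mpr (by positivity)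
  have hab : ⌊t * 2 ^ k⌋ ≤ ⌊s * 2 ^ k⌋ :=
    Int.floor_le_floor (mul_le_mul_of_nonneg_right hts (by positivity))
  have hb : ⌊s * 2 ^ k⌋ ≤ 2 ^ k := by
    have h1 : s * 2 ^ k ≤ ((2 ^ k : ℤ) : ℝ) := by
      push_cast
      nlinarith [pow_pos (show (0:ℝ) < 2 by norm_num) k]
    calc ⌊s * 2 ^ k⌋ ≤ ⌊((2 ^ k : ℤ) : ℝ)⌋ := Int.floor_le_floor h1
      _ = 2 ^ k := Int.floor_intCast _
  -- the witnessing set of disagreement positions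
  have hJsub : (Finset.Ico ⌊t * 2 ^ k⌋ ⌊s * 2 ^ k⌋).image (fun m => m + 2 ^ k - 1)
      ⊆ (Finset.Icc (-((2 ^ (k + 1) - 2 : ℕ) : ℤ)) ((2 ^ (k + 1) - 2 : ℕ) : ℤ)).filter
          (fun i => Tprime s i ≠ Tprime t i) := by
    intro i hi
    rw [Finset.mem_image] at hi
    obtain ⟨m, hm, rfl⟩ := hi
    rw [Finset.mem_Ico] at hm
    have hm0 : 0 ≤ m := le_trans ha0 hm.1
    have hmlt : m < 2 ^ k := lt_of_lt_of_le hm.2 hb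
    rw [Finset.mem_filter, Finset.mem_Icc]
    have hpowZ : ((2:ℤ) ^ (k + 1)) = 2 * 2 ^ k := by ring
    refine ⟨⟨by omega, by omega⟩, ?_⟩
    -- evaluate both sides at the position
    have hipos : (0 : ℤ) ≤ m + 2 ^ k - 1 := by omega
    have hq : ((m + 2 ^ k - 1).toNat : ℤ) = m + 2 ^ k - 1 := Int.toNat_of_nonneg hipos
    have hq1 : 2 ^ k ≤ (m + 2 ^ k - 1).toNat + 1 := by omega
    have hq2 : (m + 2 ^ k - 1).toNat + 1 < 2 ^ (k + 1) := by
      have : ((2 ^ (k+1) : ℕ) : ℤ) = 2 * 2 ^ k := by push_cast; ring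
      omega
    have hUs : Uprime s ((m + 2 ^ k - 1).toNat) = decide (⌊s * 2 ^ k⌋ ≤ m) := by
      rw [Uprime_eval hq1 hq2]
      have : ((m + 2 ^ k - 1).toNat : ℤ) + 1 - 2 ^ k = m := by omega
      rw [this]
    have hUt : Uprime t ((m + 2 ^ k - 1).toNat) = decide (⌊t * 2 ^ k⌋ ≤ m) := by
      rw [Uprime_eval hq1 hq2]
      have : ((m + 2 ^ k - 1).toNat : ℤ) + 1 - 2 ^ k = m := by omega
      rw [this]
    rw [Tprime_of_nonneg s hipos, Tprime_of_nonneg t hipos, hUs, hUt,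
      decide_eq_false (not_le.mpr hm.2), decide_eq_true_eq.mpr hm.1]
    simp
  -- cardinality of the witnessing set
  have hcard : ((Finset.Ico ⌊t * 2 ^ k⌋ ⌊s * 2 ^ k⌋).image (fun m => m + 2 ^ k - 1)).card
      = (⌊s * 2 ^ k⌋ - ⌊t * 2 ^ k⌋).toNat := by
    rw [Finset.card_image_of_injective _ (fun a b hab => by omega), Int.card_Ico]
  have hham : (⌊s * 2 ^ k⌋ - ⌊t * 2 ^ k⌋).toNat
      ≤ hamIcc (Tprime s) (Tprime t) (-((2 ^ (k + 1) - 2 : ℕ) : ℤ)) ((2 ^ (k + 1) - 2 : ℕ) : ℤ) := by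
    rw [hamIcc_eq, ← hcard]
    exact Finset.card_le_card hJsub
  -- numerics
  have hflr : ((⌊s * 2 ^ k⌋ - ⌊t * 2 ^ k⌋).toNat : ℝ) ≥ (s - t) * 2 ^ k - 1 := by
    have h1 : ((⌊s * 2 ^ k⌋ - ⌊t * 2 ^ k⌋).toNat : ℝ) = ((⌊s * 2 ^ k⌋ : ℝ) - (⌊t * 2 ^ k⌋ : ℝ)) := by
      have : ((⌊s * 2 ^ k⌋ - ⌊t * 2 ^ k⌋).toNat : ℤ) = ⌊s * 2 ^ k⌋ - ⌊t * 2 ^ k⌋ := by omega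
      exact_mod_cast congrArg (fun z : ℤ => (z : ℝ)) this
    rw [h1]
    have h2 : s * 2 ^ k - 1 < (⌊s * 2 ^ k⌋ : ℝ) := Int.sub_one_lt_floor _
    have h3 : (⌊t * 2 ^ k⌋ : ℝ) ≤ t * 2 ^ k := Int.floor_le _
    have : (s - t) * 2 ^ k = s * 2 ^ k - t * 2 ^ k := by ring
    linarith
  have h2k : (2 : ℝ) ≤ (s - t) * 2 ^ k := by
    have h1 : 2 < (s - t) * 2 ^ M := by
      rw [div_lt_iff₀ hst] at hM
      linarith [hM]
    have h2 : (2 : ℝ) ^ M ≤ 2 ^ k := pow_le_pow_right₀ one_le_two hkM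
    nlinarith
  have hdenom : (2 * ((2 ^ (k + 1) - 2 : ℕ) : ℝ) + 1) ≤ 4 * 2 ^ k := by
    have h1 : ((2 ^ (k + 1) - 2 : ℕ) : ℝ) = 2 * 2 ^ k - 2 := by
      rw [Nat.cast_sub hpow2]
      push_cast
      ring
    rw [h1]
    linarith
  have hpk : (0:ℝ) < 2 ^ k := by positivity
  unfold dseq
  calc (s - t) / 8 = ((s - t) * 2 ^ k / 2) / (4 * 2 ^ k) := by
        field_simp
        ring
    _ ≤ ((⌊s * 2 ^ k⌋ - ⌊t * 2 ^ k⌋).toNat : ℝ)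
          / (2 * ((2 ^ (k + 1) - 2 : ℕ) : ℝ) + 1) := by
        apply div_le_div₀ (by positivity) (by linarith) (denom_pos _) hdenom
    _ ≤ (hamIcc (Tprime s) (Tprime t) (-((2 ^ (k + 1) - 2 : ℕ) : ℤ)) ((2 ^ (k + 1) - 2 : ℕ) : ℤ) : ℝ)
          / (2 * ((2 ^ (k + 1) - 2 : ℕ) : ℝ) + 1) := by
        gcongr
        all_goals exact_mod_cast hham

end BesiSep
section BesiUpper
open Filter

lemma Uprime_ne_elim {t s : ℝ} (ht : 0 ≤ t) (hts : t ≤ s) {i : ℕ}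
    (h : Uprime s i ≠ Uprime t i) :
    ⌊t * 2 ^ Nat.log 2 (i + 1)⌋ ≤ (i : ℤ) + 1 - 2 ^ Nat.log 2 (i + 1) ∧
      (i : ℤ) + 1 - 2 ^ Nat.log 2 (i + 1) < ⌊s * 2 ^ Nat.log 2 (i + 1)⌋ := by
  have hf : ⌊t * 2 ^ Nat.log 2 (i + 1)⌋ ≤ ⌊s * 2 ^ Nat.log 2 (i + 1)⌋ :=
    Int.floor_le_floor (mul_le_mul_of_nonneg_right hts (by positivity))
  rw [Uprime_def, Uprime_def, ne_eq, decide_eq_decide] at h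
  by_cases hc : ⌊t * 2 ^ Nat.log 2 (i + 1)⌋ ≤ (i : ℤ) + 1 - 2 ^ Nat.log 2 (i + 1)
  · refine ⟨hc, ?_⟩
    by_contra hb
    push_neg at hb
    exact h ⟨fun _ => hc, fun _ => hb⟩
  · exfalso
    exact h ⟨fun hP => absurd (le_trans hf hP) hc, fun hQ => absurd hQ hc⟩

/-- Counting upper bound for disagreements between `U'(s)` and `U'(t)` on `[0,N]`. -/
lemma Uprime_count_le {t s : ℝ} (ht : 0 ≤ t) (hts : t ≤ s) (N : ℕ) :
    ((((Finset.range (N + 1)).filter fun i => Uprime s i ≠ Uprime t i)).card : ℝ)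
      ≤ (s - t) * 2 ^ (Nat.log 2 (N + 1) + 1) + (Nat.log 2 (N + 1) + 1) := by
  classical
  set K := Nat.log 2 (N + 1) with hK
  have hcard : ((Finset.range (N + 1)).filter fun i => Uprime s i ≠ Uprime t i).card
      ≤ ∑ k ∈ Finset.range (K + 1), (⌊s * 2 ^ k⌋ - ⌊t * 2 ^ k⌋).toNat := by
    have hT : ((Finset.range (K + 1)).sigma
        (fun k => Finset.range ((⌊s * 2 ^ k⌋ - ⌊t * 2 ^ k⌋).toNat))).card
        = ∑ k ∈ Finset.range (K + 1), (⌊s * 2 ^ k⌋ - ⌊t * 2 ^ k⌋).toNat := by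
      rw [Finset.card_sigma]
      simp
    rw [← hT]
    apply Finset.card_le_card_of_injOn
      (fun i => (⟨Nat.log 2 (i + 1),
        ((i : ℤ) + 1 - 2 ^ Nat.log 2 (i + 1) - ⌊t * 2 ^ Nat.log 2 (i + 1)⌋).toNat⟩ :
          (_ : ℕ) × ℕ))
    · intro i hi
      rw [Finset.mem_coe, Finset.mem_filter, Finset.mem_range] at hi
      obtain ⟨hiN, hne⟩ := hi
      obtain ⟨hlo, hhi⟩ := Uprime_ne_elim ht hts hne
      rw [Finset.mem_coe, Finset.mem_sigma, Finset.mem_range, Finset.mem_range]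
      refine ⟨Nat.lt_succ_of_le (Nat.log_mono_right (b := 2) (show i + 1 ≤ N + 1 by omega)), ?_⟩
      dsimp only
      omega
    · intro i hi j hj hij
      rw [Finset.mem_coe, Finset.mem_filter, Finset.mem_range] at hi hj
      obtain ⟨hiN, hichg⟩ := hi
      obtain ⟨hjN, hjchg⟩ := hj
      obtain ⟨hlo1, hhi1⟩ := Uprime_ne_elim ht hts hichg
      obtain ⟨hlo2, hhi2⟩ := Uprime_ne_elim ht hts hjchg
      rw [Sigma.mk.inj_iff] at hij
      obtain ⟨hfst, hsnd⟩ := hij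
      rw [hfst] at hlo1 hhi1
      have hsnd' : ((i : ℤ) + 1 - 2 ^ Nat.log 2 (j + 1) - ⌊t * 2 ^ Nat.log 2 (j + 1)⌋).toNat
          = ((j : ℤ) + 1 - 2 ^ Nat.log 2 (j + 1) - ⌊t * 2 ^ Nat.log 2 (j + 1)⌋).toNat := by
        rw [hfst] at hsnd
        exact_mod_cast heq_iff_eq.mp hsnd
      omega
  have hterm : ∀ k, ((⌊s * 2 ^ k⌋ - ⌊t * 2 ^ k⌋).toNat : ℝ) ≤ (s - t) * 2 ^ k + 1 := by
    intro k
    have hab : ⌊t * 2 ^ k⌋ ≤ ⌊s * 2 ^ k⌋ :=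
      Int.floor_le_floor (mul_le_mul_of_nonneg_right hts (by positivity))
    have h1 : ((⌊s * 2 ^ k⌋ - ⌊t * 2 ^ k⌋).toNat : ℝ)
        = ((⌊s * 2 ^ k⌋ : ℝ) - (⌊t * 2 ^ k⌋ : ℝ)) := by
      have : ((⌊s * 2 ^ k⌋ - ⌊t * 2 ^ k⌋).toNat : ℤ) = ⌊s * 2 ^ k⌋ - ⌊t * 2 ^ k⌋ := by omega
      exact_mod_cast congrArg (fun z : ℤ => (z : ℝ)) this
    have h2 : (⌊s * 2 ^ k⌋ : ℝ) ≤ s * 2 ^ k := Int.floor_le _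
    have h3 : t * 2 ^ k - 1 < (⌊t * 2 ^ k⌋ : ℝ) := Int.sub_one_lt_floor _
    have h4 : (s - t) * 2 ^ k = s * 2 ^ k - t * 2 ^ k := by ring
    linarith
  have hgeo : ∑ k ∈ Finset.range (K + 1), ((2 : ℝ)) ^ k = 2 ^ (K + 1) - 1 := by
    rw [geom_sum_eq (by norm_num : (2 : ℝ) ≠ 1)]
    norm_num
  have hsum : ((∑ k ∈ Finset.range (K + 1), (⌊s * 2 ^ k⌋ - ⌊t * 2 ^ k⌋).toNat : ℕ) : ℝ)
      ≤ (s - t) * 2 ^ (K + 1) + (K + 1) := by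
    push_cast
    calc ∑ k ∈ Finset.range (K + 1), ((⌊s * 2 ^ k⌋ - ⌊t * 2 ^ k⌋).toNat : ℝ)
        ≤ ∑ k ∈ Finset.range (K + 1), ((s - t) * 2 ^ k + 1) :=
          Finset.sum_le_sum (fun k _ => hterm k)
      _ = (s - t) * (2 ^ (K + 1) - 1) + (K + 1) := by
          rw [Finset.sum_add_distrib, ← Finset.mul_sum, hgeo]
          simp
      _ ≤ (s - t) * 2 ^ (K + 1) + (K + 1) := by nlinarith [sub_nonneg.mpr hts]
  calc ((((Finset.range (N + 1)).filter fun i => Uprime s i ≠ Uprime t i)).card : ℝ)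
      ≤ ((∑ k ∈ Finset.range (K + 1), (⌊s * 2 ^ k⌋ - ⌊t * 2 ^ k⌋).toNat : ℕ) : ℝ) := by
        exact_mod_cast hcard
    _ ≤ (s - t) * 2 ^ (K + 1) + (K + 1) := hsum

/-- Transfer to the two-sided distance. -/
lemma ham_Tprime_le (s t : ℝ) (n : ℕ) :
    hamIcc (Tprime s) (Tprime t) (-(n : ℤ)) n
      ≤ 2 * ((Finset.range (n + 1)).filter fun i => Uprime s i ≠ Uprime t i).card := by
  classical
  have hsub : (Finset.Icc (-(n : ℤ)) n).filter (fun i => Tprime s i ≠ Tprime t i)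
      ⊆ ((Finset.range (n + 1)).filter (fun j => Uprime s j ≠ Uprime t j)).image
          (fun j : ℕ => (j : ℤ))
        ∪ ((Finset.range (n + 1)).filter (fun j => Uprime s j ≠ Uprime t j)).image
          (fun j : ℕ => -(j : ℤ) - 1) := by
    intro i hi
    rw [Finset.mem_filter, Finset.mem_Icc] at hi
    obtain ⟨⟨hl, hr⟩, hne⟩ := hi
    rw [Finset.mem_union, Finset.mem_image, Finset.mem_image]
    rcases le_or_gt 0 i with hpos | hneg
    · left
      lift i to ℕ using hpos with j
      refine ⟨j, ?_, rfl⟩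
      rw [Finset.mem_filter, Finset.mem_range]
      refine ⟨by omega, ?_⟩
      rw [Tprime_natCast, Tprime_natCast] at hne
      exact hne
    · right
      refine ⟨(-i - 1).toNat, ?_, by omega⟩
      rw [Finset.mem_filter, Finset.mem_range]
      refine ⟨by omega, ?_⟩
      rw [Tprime_of_neg s hneg, Tprime_of_neg t hneg] at hne
      exact hne
  have hham : hamIcc (Tprime s) (Tprime t) (-(n : ℤ)) n
      ≤ (((Finset.range (n + 1)).filter (fun j => Uprime s j ≠ Uprime t j)).image
          (fun j : ℕ => (j : ℤ))
        ∪ ((Finset.range (n + 1)).filter (fun j => Uprime s j ≠ Uprime t j)).image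
          (fun j : ℕ => -(j : ℤ) - 1)).card := by
    rw [hamIcc_eq]
    exact Finset.card_le_card hsub
  have h2 := Finset.card_union_le
    (((Finset.range (n + 1)).filter (fun j => Uprime s j ≠ Uprime t j)).image
      (fun j : ℕ => (j : ℤ)))
    (((Finset.range (n + 1)).filter (fun j => Uprime s j ≠ Uprime t j)).image
      (fun j : ℕ => -(j : ℤ) - 1))
  have h3 := Finset.card_image_le
    (s := (Finset.range (n + 1)).filter (fun j => Uprime s j ≠ Uprime t j))
    (f := fun j : ℕ => (j : ℤ))
  have h4 := Finset.card_image_le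
    (s := (Finset.range (n + 1)).filter (fun j => Uprime s j ≠ Uprime t j))
    (f := fun j : ℕ => -(j : ℤ) - 1)
  omega

/-- Lipschitz upper bound: `d_B(T'(s), T'(t)) ≤ 4 (s - t)` for `0 ≤ t ≤ s ≤ 1`. -/
lemma dB_Tprime_le {t s : ℝ} (ht : 0 ≤ t) (hts : t ≤ s) (hs : s ≤ 1) :
    dB (Tprime s) (Tprime t) ≤ 4 * (s - t) := by
  rw [dB_eq_limsup]
  refine limsup_le_of_le_tendsto (dseq_nonneg _ _)
    (w := fun n : ℕ => 4 * (s - t) + 2 * ((Nat.log 2 (n + 2) : ℝ) + 1) / (2 * n + 1)) ?_ ?_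
  · have h0 := (tendsto_logterm 2).const_add (4 * (s - t))
    simpa using h0
  · intro n
    have hh := ham_Tprime_le s t n
    have hcount := Uprime_count_le ht hts n
    have hK : (Nat.log 2 (n + 1) : ℝ) ≤ (Nat.log 2 (n + 2) : ℝ) := by
      exact_mod_cast Nat.log_mono_right (by omega)
    have hpow : ((2 : ℝ)) ^ (Nat.log 2 (n + 1)) ≤ (n : ℝ) + 1 := by
      exact_mod_cast Nat.pow_log_le_self 2 (show n + 1 ≠ 0 by omega)
    have hst : (0 : ℝ) ≤ s - t := by linarith
    have hchain : (hamIcc (Tprime s) (Tprime t) (-(n : ℤ)) n : ℝ)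
        ≤ 4 * (s - t) * (2 * n + 1) + 2 * ((Nat.log 2 (n + 2) : ℝ) + 1) := by
      have c1 : (hamIcc (Tprime s) (Tprime t) (-(n : ℤ)) n : ℝ)
          ≤ 2 * (((Finset.range (n + 1)).filter fun i => Uprime s i ≠ Uprime t i).card : ℝ) := by
        exact_mod_cast hh
      have c3 : (2 : ℝ) ^ (Nat.log 2 (n + 1) + 1) ≤ 2 * ((n : ℝ) + 1) := by
        rw [pow_succ]
        nlinarith
      have c4 : (s - t) * (2 : ℝ) ^ (Nat.log 2 (n + 1) + 1) ≤ (s - t) * (2 * ((n : ℝ) + 1)) :=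
        mul_le_mul_of_nonneg_left c3 hst
      have c5 : (s - t) * (2 * ((n : ℝ) + 1)) ≤ (s - t) * (2 * (2 * (n : ℝ) + 1)) := by
        have hnn : (0 : ℝ) ≤ (n : ℝ) := Nat.cast_nonneg n
        nlinarith
      nlinarith [hcount, hK]
    unfold dseq
    rw [div_le_iff₀ (denom_pos n)]
    have hexp : (4 * (s - t) + 2 * ((Nat.log 2 (n + 2) : ℝ) + 1) / (2 * n + 1)) * (2 * n + 1)
        = 4 * (s - t) * (2 * n + 1) + 2 * ((Nat.log 2 (n + 2) : ℝ) + 1) := by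
      have hc : (2 * (n : ℝ) + 1) ≠ 0 := by positivity
      field_simp
    rw [hexp]
    exact hchain

lemma dB_Tprime_abs {a b : ℝ} (ha : a ∈ Set.Icc (0 : ℝ) 1) (hb : b ∈ Set.Icc (0 : ℝ) 1) :
    dB (Tprime a) (Tprime b) ≤ 4 * |a - b| := by
  rcases le_total b a with h | h
  · have h1 := dB_Tprime_le hb.1 h ha.2
    rwa [abs_of_nonneg (by linarith)]
  · have h1 := dB_Tprime_le ha.1 h hb.2
    rw [dB_symm]
    rwa [abs_of_nonpos (by linarith), neg_sub]

lemma dB_Tprime_pos {a b : ℝ} (ha : a ∈ Set.Icc (0 : ℝ) 1) (hb : b ∈ Set.Icc (0 : ℝ) 1)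
    (hab : a ≠ b) : 0 < dB (Tprime a) (Tprime b) := by
  rcases lt_or_gt_of_ne hab with h | h
  · have h1 := dB_Tprime_lower ha.1 h.le hb.2
    rw [dB_symm]
    linarith
  · have h1 := dB_Tprime_lower hb.1 h.le ha.2
    linarith

end BesiUpper
section BesiMeasure
open Filter

/-- Clamping to `[0,1]`. -/
noncomputable def clamp01 (x : ℝ) : ℝ := min 1 (max 0 x)

lemma clamp01_mem (x : ℝ) : clamp01 x ∈ Set.Icc (0 : ℝ) 1 :=
  ⟨le_min (by norm_num) (le_max_left 0 x), min_le_left _ _⟩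

lemma clamp01_of_mem {x : ℝ} (h : x ∈ Set.Icc (0 : ℝ) 1) : clamp01 x = x := by
  unfold clamp01
  rw [max_eq_right h.1, min_eq_right h.2]

lemma clamp01_lip (a b : ℝ) : |clamp01 a - clamp01 b| ≤ |a - b| := by
  have h1 : |clamp01 a - clamp01 b| ≤ |max 0 a - max 0 b| :=
    (abs_min_sub_min_le_max 1 (max 0 a) 1 (max 0 b)).trans (by simp)
  have h2 : |max 0 a - max 0 b| ≤ |a - b| := by
    rw [max_comm 0 a, max_comm 0 b]
    exact abs_max_sub_max_le_abs a b 0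
  exact h1.trans h2

/-- The generating balls of the Besicovitch topology. -/
def besiBalls : Set (Set (ℤ → Bool)) :=
  {s | ∃ (x : ℤ → Bool) (ε : ℝ), 0 < ε ∧ s = {y | dB x y < ε}}

/-- The Besicovitch topology on `{0,1}^ℤ`. -/
def besiTop : TopologicalSpace (ℤ → Bool) := TopologicalSpace.generateFrom besiBalls

/-- The clamped density coding map. -/
noncomputable def fmap : ℝ → (ℤ → Bool) := fun x => Tprime (clamp01 x)

lemma D_cont (z : ℤ → Bool) : Continuous fun x : ℝ => dB z (fmap x) := by
  have key : ∀ u v : ℝ, dB z (fmap u) - dB z (fmap v) ≤ 4 * |u - v| := by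
    intro u v
    have h1 : dB z (fmap u) ≤ dB z (fmap v) + dB (fmap v) (fmap u) := dB_triangle _ _ _
    have h2 : dB (fmap v) (fmap u) ≤ 4 * |clamp01 v - clamp01 u| :=
      dB_Tprime_abs (clamp01_mem v) (clamp01_mem u)
    have h3 := clamp01_lip v u
    have h4 : |v - u| = |u - v| := abs_sub_comm v u
    have h5 : |clamp01 v - clamp01 u| ≤ |u - v| := by rw [← h4]; exact h3
    linarith
  have hlip : LipschitzWith 4 fun x : ℝ => dB z (fmap x) := by
    apply LipschitzWith.of_dist_le_mul
    intro a b
    rw [Real.dist_eq, Real.dist_eq]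
    have hc : ((4 : NNReal) : ℝ) = 4 := by norm_num
    rw [hc, abs_sub_le_iff]
    exact ⟨key a b, by
      have := key b a
      rwa [abs_sub_comm] at this⟩
  exact hlip.continuous

lemma fmap_cont : @Continuous ℝ (ℤ → Bool) inferInstance besiTop fmap := by
  show @Continuous ℝ (ℤ → Bool) inferInstance (TopologicalSpace.generateFrom besiBalls) fmap
  apply continuous_generateFrom_iff.mpr
  rintro U ⟨z, ε, hε, rfl⟩
  have hpre : fmap ⁻¹' {y | dB z y < ε} = (fun x => dB z (fmap x)) ⁻¹' Set.Iio ε := rfl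
  rw [hpre]
  exact isOpen_Iio.preimage (D_cont z)

lemma fmap_meas : @Measurable ℝ (ℤ → Bool) _ (@borel _ besiTop) fmap := by
  have h : ∀ U ∈ {s : Set (ℤ → Bool) | @IsOpen _ besiTop s}, MeasurableSet (fmap ⁻¹' U) := by
    intro U hU
    exact (continuous_def.mp fmap_cont U hU).measurableSet
  exact measurable_generateFrom h

/-- The inverse shift. -/
def shiftInv (z : ℤ → Bool) : ℤ → Bool := fun i => z (i - 1)

lemma shift_shiftInv (z : ℤ → Bool) : shiftMap (shiftInv z) = z := by
  funext i
  show z (i + 1 - 1) = z i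
  norm_num

lemma shift_cont : @Continuous (ℤ → Bool) (ℤ → Bool) besiTop besiTop shiftMap := by
  show @Continuous (ℤ → Bool) (ℤ → Bool) besiTop (TopologicalSpace.generateFrom besiBalls) shiftMap
  apply continuous_generateFrom_iff.mpr
  rintro U ⟨z, ε, hε, rfl⟩
  have hpre : shiftMap ⁻¹' {y | dB z y < ε} = {y | dB (shiftInv z) y < ε} := by
    ext y
    simp only [Set.mem_preimage, Set.mem_setOf_eq]
    rw [show dB z (shiftMap y) = dB (shiftInv z) y from by
      conv_lhs => rw [← shift_shiftInv z]
      exact dB_shift_shift (shiftInv z) y]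
  rw [hpre]
  exact TopologicalSpace.isOpen_generateFrom_of_mem ⟨shiftInv z, ε, hε, rfl⟩

lemma shift_meas : @Measurable (ℤ → Bool) (ℤ → Bool) (@borel _ besiTop) (@borel _ besiTop)
    shiftMap := by
  have h : ∀ U ∈ {s : Set (ℤ → Bool) | @IsOpen _ besiTop s},
      @MeasurableSet _ (@borel _ besiTop) (shiftMap ⁻¹' U) := by
    intro U hU
    exact MeasurableSpace.measurableSet_generateFrom (continuous_def.mp shift_cont U hU)
  exact @measurable_generateFrom _ _ (@borel _ besiTop) _ shiftMap h

lemma open_mem_iff {a b : ℤ → Bool} (hab : dB a b = 0) {U : Set (ℤ → Bool)}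
    (hU : @IsOpen _ besiTop U) : a ∈ U ↔ b ∈ U := by
  have hU' : TopologicalSpace.GenerateOpen besiBalls U := hU
  clear hU
  induction hU' with
  | basic u hu =>
      obtain ⟨z, ε, hε, rfl⟩ := hu
      simp only [Set.mem_setOf_eq, dB_congr_of_zero hab z]
  | univ => simp
  | inter u v hu hv ihu ihv =>
      exact and_congr ihu ihv
  | sUnion S hS ih =>
      simp only [Set.mem_sUnion]
      exact ⟨fun ⟨t, ht, hat⟩ => ⟨t, ht, (ih t ht).mp hat⟩,
        fun ⟨t, ht, hbt⟩ => ⟨t, ht, (ih t ht).mpr hbt⟩⟩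

lemma meas_mem_iff {a b : ℤ → Bool} (hab : dB a b = 0) {s : Set (ℤ → Bool)}
    (hs : @MeasurableSet _ (@borel _ besiTop) s) : a ∈ s ↔ b ∈ s := by
  have hs' : @MeasurableSet _ (MeasurableSpace.generateFrom
      {s : Set (ℤ → Bool) | @IsOpen _ besiTop s}) s := hs
  clear hs
  induction s, hs' using MeasurableSpace.generateFrom_induction with
  | hC t ht _ => exact open_mem_iff hab ht
  | empty => simp
  | compl t _ ih => simp only [Set.mem_compl_iff]; exact not_congr ih
  | iUnion f _ ih =>
      simp only [Set.mem_iUnion]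
      exact exists_congr ih

/-- The main construction. -/
theorem main_besi :
    ∃ μ : @MeasureTheory.Measure (ℤ → Bool) (@borel _ besiTop),
      μ ≠ 0 ∧
      (∀ s : Set (ℤ → Bool), @MeasurableSet _ (@borel _ besiTop) s → μ (shiftMap ⁻¹' s) = μ s) ∧
      (∀ x : ℤ → Bool, μ {y | dB x y = 0} = 0) := by
  classical
  letI : MeasurableSpace (ℤ → Bool) := @borel _ besiTop
  refine ⟨MeasureTheory.Measure.map fmap
    (MeasureTheory.volume.restrict (Set.Icc (0 : ℝ) 1)), ?_, ?_, ?_⟩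
  · -- nonzero
    have h1 : MeasureTheory.Measure.map fmap
        (MeasureTheory.volume.restrict (Set.Icc (0 : ℝ) 1)) Set.univ = 1 := by
      rw [MeasureTheory.Measure.map_apply fmap_meas MeasurableSet.univ, Set.preimage_univ,
        MeasureTheory.Measure.restrict_apply MeasurableSet.univ, Set.univ_inter, Real.volume_Icc]
      norm_num
    intro h0
    rw [h0] at h1
    simp at h1
  · -- shift invariance
    intro s hs
    rw [MeasureTheory.Measure.map_apply fmap_meas (shift_meas hs),
      MeasureTheory.Measure.map_apply fmap_meas hs]
    congr 1
    ext x
    simp only [Set.mem_preimage]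
    exact meas_mem_iff (dB_shift_Tprime (clamp01 x)) hs
  · -- classes are null
    intro z
    have hCeq : {y | dB z y = 0} = ⋂ n : ℕ, {y | dB z y < 1 / (n + 1)} := by
      ext y
      simp only [Set.mem_setOf_eq, Set.mem_iInter]
      constructor
      · intro h n
        rw [h]
        positivity
      · intro h
        refine le_antisymm ?_ (dB_nonneg z y)
        by_contra hpos
        push_neg at hpos
        obtain ⟨n, hn⟩ := exists_nat_one_div_lt hpos
        exact absurd (h n) (not_lt.mpr hn.le)
    have hC : MeasurableSet {y | dB z y = 0} := by
      rw [hCeq]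
      refine MeasurableSet.iInter fun n => ?_
      exact MeasurableSpace.measurableSet_generateFrom
        (TopologicalSpace.isOpen_generateFrom_of_mem ⟨z, 1 / (n + 1), by positivity, rfl⟩)
    rw [MeasureTheory.Measure.map_apply fmap_meas hC,
      MeasureTheory.Measure.restrict_apply (fmap_meas hC)]
    have hsub : (fmap ⁻¹' {y | dB z y = 0} ∩ Set.Icc 0 1).Subsingleton := by
      rintro p ⟨hp, hpI⟩ q ⟨hq, hqI⟩
      by_contra hpq
      have hfp : dB z (fmap p) = 0 := hp
      have hfq : dB z (fmap q) = 0 := hq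
      have h0 : dB (fmap p) (fmap q) ≤ 0 := by
        calc dB (fmap p) (fmap q) ≤ dB (fmap p) z + dB z (fmap q) := dB_triangle _ _ _
          _ = 0 := by rw [dB_symm (fmap p) z, hfp, hfq, add_zero]
      have hfp' : fmap p = Tprime p := by unfold fmap; rw [clamp01_of_mem hpI]
      have hfq' : fmap q = Tprime q := by unfold fmap; rw [clamp01_of_mem hqI]
      have hpos : 0 < dB (fmap p) (fmap q) := by
        rw [hfp', hfq']
        exact dB_Tprime_pos hpI hqI hpq
      linarith
    exact hsub.measure_zero _

end BesiMeasure


/-- there is a nontrivial (nonzero, nonatomic, i.e. giving measure zero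
to every `dB`-equivalence class) shift-invariant Borel measure for the Besicovitch
topology on `{0,1}^ℤ`. -/
theorem exists_nontrivial_shift_invariant_besicovitch_measure :
    let τ : TopologicalSpace (ℤ → Bool) :=
      TopologicalSpace.generateFrom
        {s | ∃ (x : ℤ → Bool) (ε : ℝ), 0 < ε ∧ s = {y | dB x y < ε}}
    let m : MeasurableSpace (ℤ → Bool) := @borel _ τ
    ∃ μ : @MeasureTheory.Measure (ℤ → Bool) m,
      μ ≠ 0 ∧
      (∀ s : Set (ℤ → Bool), @MeasurableSet _ m s → μ (shiftMap ⁻¹' s) = μ s) ∧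
      (∀ x : ℤ → Bool, μ {y | dB x y = 0} = 0) := by
  intro τ m
  exact main_besi
end
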